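/- arXiv:2003.08782 — 9 statements merged into one kernel-verified Lean document; each statement's English description precedes it below -/
import Mathlib

section
/- Let G be a finite connected simple graph with n vertices and let T be a spanning tree of G, with m edges of G outside T. Then the average over all 2^m partial orientations σ of G with respect to T of the characteristic polynomial det(xI − H(G_T^σ)) equals the matching polynomial of G: (1/2^m) Σ_{σ ∈ Or_T(G)} det(xI − H(G_T^σ)) = μ_G(x). -/
open Polynomial

variable {V : Type*}

/-- A finset of edges (as unordered pairs) forms a matching of `G`:
all elements are edges of `G` and they are pairwise vertex-disjoint. -/
def IsMatchingSet (G : SimpleGraph V) (M : Finset (Sym2 V)) : Prop :=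
  (↑M ⊆ G.edgeSet) ∧ (M : Set (Sym2 V)).Pairwise fun e f => ∀ v, v ∈ e → v ∉ f

/-- `numMatchings G k` = number of matchings of `G` with exactly `k` edges. -/
noncomputable def numMatchings [Fintype V] (G : SimpleGraph V) (k : ℕ) : ℕ :=
  Nat.card {M : Finset (Sym2 V) // M.card = k ∧ IsMatchingSet G M}

/-- The matching polynomial `μ_G(x) = Σ_k (-1)^k m_k(G) x^(n-2k)`. -/
noncomputable def matchingPoly [Fintype V] (G : SimpleGraph V) : Polynomial ℝ :=
  ∑ k ∈ Finset.range (Fintype.card V + 1),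
    C ((-1 : ℝ) ^ k * (numMatchings G k : ℝ)) * X ^ (Fintype.card V - 2 * k)

open Classical in
/-- The Hermitian adjacency matrix of the partial orientation of `G` with respect to the
spanning tree `T`, where the edges outside `T` are `e 0, …, e (m-1)` and the `j`-th edge
`e j = (u_j, v_j)` is oriented from `u_j` to `v_j` if `s j = 1` and from `v_j` to `u_j`
if `s j = -1`: tree edges get entry `1`, and the edge `e j` contributes entries
`±(s j)·i`. -/
noncomputable def hermAdjP {m : ℕ} [Fintype V] [DecidableEq V] (T : SimpleGraph V)
    (e : Fin m → V × V) (s : Fin m → ℤˣ) : Matrix V V ℂ :=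
  (Matrix.of fun u v => if T.Adj u v then (1 : ℂ) else 0) +
    ∑ j, (((s j : ℤ) : ℂ) * Complex.I) •
      (Matrix.single (e j).1 (e j).2 1 - Matrix.single (e j).2 (e j).1 1)

section ACP
variable {m : ℕ} [Fintype V] [DecidableEq V] (T : SimpleGraph V) (e : Fin m → V × V)

open Classical in
lemma ACP_apply (s : Fin m → ℤˣ) (u v : V) :
    hermAdjP T e s u v = (if T.Adj u v then (1:ℂ) else 0)
      + ∑ j, (((s j : ℤ) : ℂ) * Complex.I) *
          ((if (e j).1 = u ∧ (e j).2 = v then (1:ℂ) else 0)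
            - (if (e j).2 = u ∧ (e j).1 = v then (1:ℂ) else 0)) := by
  simp [hermAdjP, Matrix.sum_apply, Matrix.single, Matrix.of_apply,
    Matrix.add_apply, Matrix.sub_apply, Matrix.smul_apply, smul_eq_mul]

open Classical in
lemma ACP_nonG {G : SimpleGraph V} (hTG : T ≤ G)
    (hGe : ∀ j, G.Adj (e j).1 (e j).2) (s : Fin m → ℤˣ) {u v : V}
    (h : ¬ G.Adj u v) : hermAdjP T e s u v = 0 := by
  rw [ACP_apply]
  rw [if_neg (fun hA => h (hTG hA))]
  rw [Finset.sum_eq_zero, add_zero]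
  intro j _
  have h1 : ¬((e j).1 = u ∧ (e j).2 = v) := by rintro ⟨rfl, rfl⟩; exact h (hGe j)
  have h2 : ¬((e j).2 = u ∧ (e j).1 = v) := by
    rintro ⟨rfl, rfl⟩; exact h (hGe j).symm
  rw [if_neg h1, if_neg h2, sub_zero, mul_zero]

open Classical in
lemma ACP_tree (hnT : ∀ j, Sym2.mk (e j).1 (e j).2 ∉ T.edgeSet) (s : Fin m → ℤˣ) {u v : V}
    (huv : T.Adj u v) : hermAdjP T e s u v = 1 := by
  rw [ACP_apply, if_pos huv, Finset.sum_eq_zero, add_zero]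
  intro j _
  have h1 : ¬((e j).1 = u ∧ (e j).2 = v) := by
    rintro ⟨rfl, rfl⟩; exact hnT j (T.mem_edgeSet.2 huv)
  have h2 : ¬((e j).2 = u ∧ (e j).1 = v) := by
    rintro ⟨rfl, rfl⟩; exact hnT j (T.mem_edgeSet.2 huv.symm)
  rw [if_neg h1, if_neg h2, sub_zero, mul_zero]

lemma ACP_edge (hinj : Function.Injective fun j => Sym2.mk (e j).1 (e j).2)
    (hnT : ∀ j, Sym2.mk (e j).1 (e j).2 ∉ T.edgeSet) (hne : ∀ j, (e j).1 ≠ (e j).2)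
    (s : Fin m → ℤˣ) (j : Fin m) :
    hermAdjP T e s (e j).1 (e j).2 = ((s j : ℤ) : ℂ) * Complex.I ∧
    hermAdjP T e s (e j).2 (e j).1 = -(((s j : ℤ) : ℂ) * Complex.I) := by
  have hT1 : ¬ T.Adj (e j).1 (e j).2 := fun h => hnT j (T.mem_edgeSet.2 h)
  have hT2 : ¬ T.Adj (e j).2 (e j).1 := fun h => hnT j (T.mem_edgeSet.2 h.symm)
  constructor
  · rw [ACP_apply, if_neg hT1, Finset.sum_eq_single j]
    · simp [hne j]
    · intro j' _ hj'
      have h1 : ¬((e j').1 = (e j).1 ∧ (e j').2 = (e j).2) := by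
        rintro ⟨ha, hb⟩
        exact hj' (hinj (by simp only [Sym2.mk_eq_mk_iff]; left; exact Prod.ext ha hb))
      have h2 : ¬((e j').2 = (e j).1 ∧ (e j').1 = (e j).2) := by
        rintro ⟨ha, hb⟩
        refine hj' (hinj ?_)
        simp only [Sym2.mk_eq_mk_iff]
        right
        exact Prod.ext hb ha
      rw [if_neg h1, if_neg h2, sub_zero, mul_zero]
    · simp
  · rw [ACP_apply, if_neg hT2, Finset.sum_eq_single j]
    · simp [(hne j).symm, hne j]
    · intro j' _ hj'
      have h1 : ¬((e j').1 = (e j).2 ∧ (e j').2 = (e j).1) := by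
        rintro ⟨ha, hb⟩
        refine hj' (hinj ?_)
        simp only [Sym2.mk_eq_mk_iff]
        right
        exact Prod.ext ha hb
      have h2 : ¬((e j').2 = (e j).2 ∧ (e j').1 = (e j).1) := by
        rintro ⟨ha, hb⟩
        exact hj' (hinj (by simp only [Sym2.mk_eq_mk_iff]; left; exact Prod.ext hb ha))
      rw [if_neg h1, if_neg h2, sub_zero, mul_zero]
    · simp

lemma ACP_update (s : Fin m → ℤˣ) (j : Fin m) (a : ℤˣ) {u v : V}
    (h1 : ¬((e j).1 = u ∧ (e j).2 = v)) (h2 : ¬((e j).2 = u ∧ (e j).1 = v)) :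
    hermAdjP T e (Function.update s j a) u v = hermAdjP T e s u v := by
  rw [ACP_apply, ACP_apply]
  congr 1
  refine Finset.sum_congr rfl fun j' _ => ?_
  by_cases hj : j' = j
  · subst hj; rw [if_neg h1, if_neg h2, sub_zero, mul_zero, mul_zero]
  · rw [Function.update_of_ne hj]

end ACP

section MAIN
variable {m : ℕ} [Fintype V] [DecidableEq V] {G T : SimpleGraph V} {e : Fin m → V × V}

open Matrix Equiv Finset

/-- flipping one sign: the flip map as an involutive function -/
lemma ACP_flip_invol (j : Fin m) :
    Function.Involutive (fun s : Fin m → ℤˣ => Function.update s j (-(s j))) := by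
  intro s
  funext i
  by_cases h : i = j
  · subst h; simp
  · simp [Function.update_of_ne h]

lemma ACP_flip_zero (hTG : T ≤ G)
    (hinj : Function.Injective fun j => Sym2.mk (e j).1 (e j).2)
    (hnT : ∀ j, Sym2.mk (e j).1 (e j).2 ∉ T.edgeSet) (hne : ∀ j, (e j).1 ≠ (e j).2)
    (σ : Equiv.Perm V) (x : V) (j : Fin m)
    (hx1 : σ x ≠ x) (hx2 : σ (σ x) ≠ x) (hej : Sym2.mk (e j).1 (e j).2 = s(σ x, x)) :
    ∑ s : Fin m → ℤˣ, (∏ i, (hermAdjP T e s).charmatrix (σ i) i) = 0 := by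
  set P : (Fin m → ℤˣ) → Polynomial ℂ :=
    fun s => ∏ i, (hermAdjP T e s).charmatrix (σ i) i with hP
  have huniq : ∀ i : V, i ≠ x → s(σ i, i) ≠ s(σ x, x) := by
    intro i hix h
    rcases Sym2.eq_iff.mp h with ⟨h1, h2⟩ | ⟨h1, h2⟩
    · exact hix h2
    · rw [h2] at h1; exact hx2 h1
  have hcases : e j = (σ x, x) ∨ e j = (x, σ x) := by
    rcases (Sym2.mk_eq_mk_iff (q := (σ x, x))).mp hej with h | h
    · left; exact h
    · right; exact h
  have key : ∀ s : Fin m → ℤˣ, P (Function.update s j (-(s j))) = - P s := by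
    intro s
    have hrest : ∀ i ∈ Finset.univ.erase x,
        (hermAdjP T e (Function.update s j (-(s j)))).charmatrix (σ i) i
          = (hermAdjP T e s).charmatrix (σ i) i := by
      intro i hi
      have hix : i ≠ x := (Finset.mem_erase.mp hi).1
      have h1 : ¬((e j).1 = σ i ∧ (e j).2 = i) := by
        rintro ⟨ha, hb⟩
        refine huniq i hix ?_
        rw [← hej]
        have : e j = (σ i, i) := Prod.ext ha hb
        rw [this]
      have h2 : ¬((e j).2 = σ i ∧ (e j).1 = i) := by
        rintro ⟨ha, hb⟩
        refine huniq i hix ?_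
        rw [← hej]
        have : e j = (i, σ i) := Prod.ext hb ha
        rw [this, ← Sym2.eq_swap]
      rw [charmatrix_apply, charmatrix_apply, ACP_update T e s j _ h1 h2]
    have hflip : (hermAdjP T e (Function.update s j (-(s j)))).charmatrix (σ x) x
        = - ((hermAdjP T e s).charmatrix (σ x) x) := by
      rw [charmatrix_apply_ne _ _ _ hx1, charmatrix_apply_ne _ _ _ hx1]
      rcases hcases with hc | hc
      · have h1 := fun s' => (ACP_edge T e hinj hnT hne s' j).1
        have e1 := h1 s
        have e2 := h1 (Function.update s j (-(s j)))
        rw [hc] at e1 e2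
        simp only at e1 e2
        rw [e1, e2, Function.update_self]
        push_cast
        rw [neg_mul, map_neg, neg_neg]
      · have h1 := fun s' => (ACP_edge T e hinj hnT hne s' j).2
        have e1 := h1 s
        have e2 := h1 (Function.update s j (-(s j)))
        rw [hc] at e1 e2
        simp only at e1 e2
        rw [e1, e2, Function.update_self]
        push_cast
        rw [neg_mul, neg_neg, map_neg, neg_neg]
    calc P (Function.update s j (-(s j)))
        = (hermAdjP T e (Function.update s j (-(s j)))).charmatrix (σ x) x *
            ∏ i ∈ Finset.univ.erase x,
              (hermAdjP T e (Function.update s j (-(s j)))).charmatrix (σ i) i := by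
          exact (Finset.mul_prod_erase Finset.univ
            (fun i => (hermAdjP T e (Function.update s j (-(s j)))).charmatrix (σ i) i)
            (Finset.mem_univ x)).symm
      _ = - ((hermAdjP T e s).charmatrix (σ x) x *
            ∏ i ∈ Finset.univ.erase x, (hermAdjP T e s).charmatrix (σ i) i) := by
          rw [hflip, Finset.prod_congr rfl hrest, neg_mul]
      _ = - P s := by
          rw [Finset.mul_prod_erase Finset.univ
            (fun i => (hermAdjP T e s).charmatrix (σ i) i) (Finset.mem_univ x)]
  have h1 : ∑ s : Fin m → ℤˣ, P s
      = ∑ s : Fin m → ℤˣ, P (Function.update s j (-(s j))) := by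
    rw [← Equiv.sum_comp ((ACP_flip_invol j).toPerm _) P]
    simp only [Function.Involutive.coe_toPerm]
  have h2 : ∑ s : Fin m → ℤˣ, P (Function.update s j (-(s j)))
      = - ∑ s : Fin m → ℤˣ, P s := by
    rw [← Finset.sum_neg_distrib]
    refine Finset.sum_congr rfl fun s _ => ?_
    exact key s
  have h3 : ∑ s : Fin m → ℤˣ, P s = - ∑ s : Fin m → ℤˣ, P s := h1.trans h2
  have h4 : (2 : Polynomial ℂ) * ∑ s : Fin m → ℤˣ, P s = 0 := by
    rw [two_mul]; nth_rewrite 2 [h3]; ring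
  rcases mul_eq_zero.mp h4 with h | h
  · exact absurd h two_ne_zero
  · exact h

open Classical in
lemma ACP_prod_invol (hTG : T ≤ G)
    (hinj : Function.Injective fun j => Sym2.mk (e j).1 (e j).2)
    (hnT : ∀ j, Sym2.mk (e j).1 (e j).2 ∉ T.edgeSet) (hne : ∀ j, (e j).1 ≠ (e j).2)
    (hGe : ∀ j, G.Adj (e j).1 (e j).2)
    (hcover : ∀ x : Sym2 V, x ∈ G.edgeSet \ T.edgeSet ↔ ∃ j, Sym2.mk (e j).1 (e j).2 = x)
    (σ : Equiv.Perm V) (hσσ : ∀ v, σ (σ v) = v)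
    (hσG : ∀ i, σ i ≠ i → G.Adj (σ i) i) (s : Fin m → ℤˣ) :
    ∏ i, (hermAdjP T e s).charmatrix (σ i) i
      = X ^ (Fintype.card V - σ.support.card) := by
  have hsplit := Finset.prod_mul_prod_compl σ.support
    (fun i => (hermAdjP T e s).charmatrix (σ i) i)
  have h1 : ∏ i ∈ σ.support, (hermAdjP T e s).charmatrix (σ i) i = 1 := by
    refine Finset.prod_involution (fun a _ => σ a) ?_ ?_ ?_ ?_
    · intro a ha
      have haa : σ a ≠ a := Equiv.Perm.mem_support.mp ha
      rw [charmatrix_apply_ne _ _ _ haa, hσσ a,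
        charmatrix_apply_ne _ _ _ (Ne.symm haa), neg_mul_neg, ← Polynomial.C_mul]
      by_cases hTadj : T.Adj (σ a) a
      · rw [ACP_tree T e hnT s hTadj, ACP_tree T e hnT s hTadj.symm, mul_one, Polynomial.C_1]
      · have hGadj : G.Adj (σ a) a := hσG a haa
        have hmem : s(σ a, a) ∈ G.edgeSet \ T.edgeSet := by
          refine ⟨G.mem_edgeSet.2 hGadj, fun hmem => hTadj (T.mem_edgeSet.1 hmem)⟩
        obtain ⟨j, hj⟩ := (hcover _).1 hmem
        have hedge := ACP_edge T e hinj hnT hne s j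
        rcases (Sym2.mk_eq_mk_iff (q := (σ a, a))).mp hj with hc | hc
        · have hc' : e j = (σ a, a) := hc
          rw [hc'] at hedge
          simp only at hedge
          rw [hedge.1, hedge.2]
          rcases Int.units_eq_one_or (s j) with h | h <;>
            · rw [h]; push_cast; ring_nf; simp [Complex.I_sq]
        · have hc' : e j = (a, σ a) := hc
          rw [hc'] at hedge
          simp only at hedge
          rw [hedge.1, hedge.2]
          rcases Int.units_eq_one_or (s j) with h | h <;>
            · rw [h]; push_cast; ring_nf; simp [Complex.I_sq]
    · intro a ha _
      exact Equiv.Perm.mem_support.mp ha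
    · intro a ha
      rw [Equiv.Perm.mem_support, hσσ a]
      exact (Equiv.Perm.mem_support.mp ha).symm
    · intro a _
      exact hσσ a
  have h2 : ∏ i ∈ σ.supportᶜ, (hermAdjP T e s).charmatrix (σ i) i
      = X ^ (Fintype.card V - σ.support.card) := by
    have : ∀ i ∈ σ.supportᶜ, (hermAdjP T e s).charmatrix (σ i) i = (X : Polynomial ℂ) := by
      intro i hi
      have hfix : σ i = i := by
        have := Finset.mem_compl.mp hi
        rw [Equiv.Perm.mem_support] at this
        exact not_not.mp this
      rw [hfix, charmatrix_apply_eq, ACP_nonG T e hTG hGe s (G.irrefl), map_zero, sub_zero]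
    rw [Finset.prod_congr rfl this, Finset.prod_const, Finset.card_compl]
  rw [← hsplit, h1, one_mul, h2]

lemma ACP_no_long_cycle (hac : T.IsAcyclic) (σ : Equiv.Perm V) (i₀ : V)
    (h2 : σ (σ i₀) ≠ i₀)
    (hall : ∀ a : ℕ, T.Adj (σ^[a+1] i₀) (σ^[a] i₀)) : False := by
  have hper : i₀ ∈ Function.periodicPts σ := by
    refine ⟨orderOf σ, orderOf_pos σ, ?_⟩
    show σ^[orderOf σ] i₀ = i₀
    rw [← Equiv.Perm.coe_pow, pow_orderOf_eq_one]
    rfl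
  set k := Function.minimalPeriod σ i₀ with hk
  have hiter : σ^[k] i₀ = i₀ := Function.iterate_minimalPeriod
  have hk0 : 0 < k := Function.minimalPeriod_pos_of_mem_periodicPts hper
  have hk1 : k ≠ 1 := by
    intro h; rw [h] at hiter; simp at hiter; rw [hiter] at h2; exact h2 hiter
  have hk2 : k ≠ 2 := by
    intro h; rw [h] at hiter
    rw [show (2:ℕ) = 1+1 from rfl, Function.iterate_add_apply] at hiter
    simp at hiter
    exact h2 hiter
  have hk3 : 3 ≤ k := by omega
  have hinjOn := Function.iterate_injOn_Iio_minimalPeriod (f := ⇑σ) (x := i₀)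
  have hbr := (SimpleGraph.isAcyclic_iff_forall_adj_isBridge.mp hac) (hall 0)
  simp only [Function.iterate_one, Function.iterate_zero_apply, zero_add] at hbr
  rw [SimpleGraph.isBridge_iff] at hbr
  have hnreach := hbr
  have hre : ∀ b : ℕ, 1 + b ≤ k →
      (T \ SimpleGraph.fromEdgeSet {s(σ i₀, i₀)}).Reachable (σ^[1] i₀) (σ^[1+b] i₀) := by
    intro b
    induction b with
    | zero => intro _; exact SimpleGraph.Reachable.refl _
    | succ b ih =>
      intro hb
      have hb' : 1 + b ≤ k := by omega
      refine (ih hb').trans ?_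
      have hadj : T.Adj (σ^[1+b] i₀) (σ^[1+(b+1)] i₀) := by
        have := hall (1+b)
        have heq : (1+b)+1 = 1+(b+1) := by omega
        rw [heq] at this
        exact this.symm
      have hne' : s(σ^[1+b] i₀, σ^[1+(b+1)] i₀) ≠ s(σ i₀, i₀) := by
        intro heq
        have h1lt : (1:ℕ) < k := by omega
        have hblt : 1 + b < k := by omega
        rcases Sym2.eq_iff.mp heq with ⟨ha, hb2⟩ | ⟨ha, hb2⟩
        · -- σ^[1+b] i₀ = σ i₀  and σ^[1+(b+1)] i₀ = i₀
          have : (1+b) = 1 := by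
            refine hinjOn (Set.mem_Iio.mpr hblt) (Set.mem_Iio.mpr h1lt) ?_
            simpa using ha
          have hb0 : b = 0 := by omega
          rw [hb0] at hb2
          simp only [Function.iterate_add_apply, Function.iterate_one,
            Function.iterate_zero_apply] at hb2
          exact h2 hb2
        · -- σ^[1+b] i₀ = i₀
          have : (1+b) = 0 := by
            refine hinjOn (Set.mem_Iio.mpr hblt) (Set.mem_Iio.mpr hk0) ?_
            simpa using ha
          omega
      have hstep : (T \ SimpleGraph.fromEdgeSet {s(σ i₀, i₀)}).Adj
          (σ^[1+b] i₀) (σ^[1+(b+1)] i₀) := by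
        rw [SimpleGraph.sdiff_adj]
        refine ⟨hadj, ?_⟩
        rw [SimpleGraph.fromEdgeSet_adj]
        rintro ⟨hmem, -⟩
        exact hne' (by simpa using hmem)
      exact hstep.reachable
  have hfin := hre (k-1) (by omega)
  have hkk : 1 + (k-1) = k := by omega
  rw [hkk, hiter, Function.iterate_one] at hfin
  exact hnreach hfin

lemma ACP_sign (σ : Equiv.Perm V) (hσ2 : σ * σ = 1) :
    ∃ k, σ.support.card = 2 * k ∧ Equiv.Perm.sign σ = (-1 : ℤˣ) ^ k := by
  refine ⟨Multiset.card σ.cycleType, ?_, ?_⟩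
  · have hall2 : ∀ c ∈ σ.cycleType, c = 2 := by
      intro c hc
      have h2le := Equiv.Perm.two_le_of_mem_cycleType hc
      have hdvd : c ∣ orderOf σ := by
        rw [← Equiv.Perm.lcm_cycleType]; exact Multiset.dvd_lcm hc
      have hord : orderOf σ ∣ 2 := orderOf_dvd_of_pow_eq_one (by rw [pow_two]; exact hσ2)
      have hle : c ≤ 2 := Nat.le_of_dvd (by norm_num) (hdvd.trans hord)
      omega
    have := Multiset.eq_replicate_card.mpr hall2
    rw [← Equiv.Perm.sum_cycleType, this, Multiset.sum_replicate, smul_eq_mul, mul_comm]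
    simp
  · rw [Equiv.Perm.sign_of_cycleType]
    have hall2 : ∀ c ∈ σ.cycleType, c = 2 := by
      intro c hc
      have h2le := Equiv.Perm.two_le_of_mem_cycleType hc
      have hdvd : c ∣ orderOf σ := by
        rw [← Equiv.Perm.lcm_cycleType]; exact Multiset.dvd_lcm hc
      have hord : orderOf σ ∣ 2 := orderOf_dvd_of_pow_eq_one (by rw [pow_two]; exact hσ2)
      have hle : c ≤ 2 := Nat.le_of_dvd (by norm_num) (hdvd.trans hord)
      omega
    have hrep := Multiset.eq_replicate_card.mpr hall2
    have hsum : σ.cycleType.sum = 2 * Multiset.card σ.cycleType := by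
      rw [hrep, Multiset.sum_replicate, smul_eq_mul, mul_comm]
      simp
    rw [hsum]
    rw [show 2 * Multiset.card σ.cycleType + Multiset.card σ.cycleType
      = 2 * Multiset.card σ.cycleType + Multiset.card σ.cycleType from rfl]
    rw [pow_add, pow_mul]
    norm_num

lemma ACP_orbit (σ : Equiv.Perm V) (i₀ : V) (h2 : σ (σ i₀) ≠ i₀) (a : ℕ) :
    σ ((⇑σ)^[a] i₀) ≠ (⇑σ)^[a] i₀ ∧ σ (σ ((⇑σ)^[a] i₀)) ≠ (⇑σ)^[a] i₀ := by
  have hper : i₀ ∈ Function.periodicPts ⇑σ := by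
    refine ⟨orderOf σ, orderOf_pos σ, ?_⟩
    show (⇑σ)^[orderOf σ] i₀ = i₀
    rw [← Equiv.Perm.coe_pow, pow_orderOf_eq_one]
    rfl
  set k := Function.minimalPeriod (⇑σ) i₀ with hk
  have hiter : (⇑σ)^[k] i₀ = i₀ := Function.iterate_minimalPeriod
  have hk0 : 0 < k := Function.minimalPeriod_pos_of_mem_periodicPts hper
  have hk1 : k ≠ 1 := by
    intro h; rw [h] at hiter; simp at hiter; rw [hiter] at h2; exact h2 hiter
  have hk2 : k ≠ 2 := by
    intro h; rw [h] at hiter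
    rw [show (2:ℕ) = 1+1 from rfl, Function.iterate_add_apply] at hiter
    simp at hiter
    exact h2 hiter
  have hk3 : 3 ≤ k := by omega
  have hkx : Function.minimalPeriod (⇑σ) ((⇑σ)^[a] i₀) = k :=
    Function.minimalPeriod_apply_iterate hper a
  constructor
  · intro h
    have hp : Function.IsPeriodicPt (⇑σ) 1 ((⇑σ)^[a] i₀) := by
      show (⇑σ)^[1] _ = _; simpa using h
    have hdvd := hp.minimalPeriod_dvd
    rw [hkx] at hdvd
    have := Nat.le_of_dvd one_pos hdvd
    omega
  · intro h
    have hp : Function.IsPeriodicPt (⇑σ) 2 ((⇑σ)^[a] i₀) := by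
      show (⇑σ)^[2] _ = _
      rw [show (2:ℕ) = 1+1 from rfl, Function.iterate_add_apply]
      simpa using h
    have hdvd := hp.minimalPeriod_dvd
    rw [hkx] at hdvd
    have := Nat.le_of_dvd (by norm_num) hdvd
    omega


set_option maxHeartbeats 1000000 in
/-- the average over all `2^m` partial orientations of `G` with respect to a
spanning tree `T` of the characteristic polynomial `det(xI − H(G_T^σ))` is the matching
polynomial of `G`. -/
theorem average_charpoly_eq_matchingPoly {V : Type*} [Fintype V] [DecidableEq V]
    (G T : SimpleGraph V) (hG : G.Connected) (hTG : T ≤ G) (hT : T.IsTree)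
    (m : ℕ) (e : Fin m → V × V)
    (hinj : Function.Injective fun j => Sym2.mk (e j).1 (e j).2)
    (hcover : ∀ x : Sym2 V, x ∈ G.edgeSet \ T.edgeSet ↔ ∃ j, Sym2.mk (e j).1 (e j).2 = x) :
    ((1 : ℂ) / 2 ^ m) • ∑ s : Fin m → ℤˣ, (hermAdjP T e s).charpoly =
      (matchingPoly G).map (algebraMap ℝ ℂ) := by
  classical
  have hforall : ∀ j, Sym2.mk (e j).1 (e j).2 ∈ G.edgeSet \ T.edgeSet := fun j => (hcover _).2 ⟨j, rfl⟩
  have hGe : ∀ j, G.Adj (e j).1 (e j).2 := fun j => G.mem_edgeSet.1 (hforall j).1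
  have hne : ∀ j, (e j).1 ≠ (e j).2 := fun j => (hGe j).ne
  have hnT : ∀ j, Sym2.mk (e j).1 (e j).2 ∉ T.edgeSet := fun j => (hforall j).2
  set n := Fintype.card V with hn
  set S : Finset (Equiv.Perm V) := Finset.univ.filter
    (fun σ => (∀ v, σ (σ v) = v) ∧ ∀ i, σ i ≠ i → G.Adj (σ i) i) with hS
  set A : Finset (Finset (Sym2 V)) := Finset.univ.filter (fun M => IsMatchingSet G M) with hA
  have hstep1 : ∀ s : Fin m → ℤˣ, (hermAdjP T e s).charpoly
      = ∑ σ : Equiv.Perm V, Equiv.Perm.sign σ • ∏ i, (hermAdjP T e s).charmatrix (σ i) i := by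
    intro s
    show ((hermAdjP T e s).charmatrix).det = _
    rw [Matrix.det_apply]
  have hswap : ∑ s : Fin m → ℤˣ, (hermAdjP T e s).charpoly
      = ∑ σ : Equiv.Perm V, Equiv.Perm.sign σ •
          ∑ s : Fin m → ℤˣ, ∏ i, (hermAdjP T e s).charmatrix (σ i) i := by
    rw [Finset.sum_congr rfl fun s _ => hstep1 s, Finset.sum_comm]
    exact Finset.sum_congr rfl fun σ _ => (Finset.smul_sum).symm
  have hvanish : ∀ σ : Equiv.Perm V, σ ∉ S →
      ∑ s : Fin m → ℤˣ, ∏ i, (hermAdjP T e s).charmatrix (σ i) i = 0 := by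
    intro σ hσ
    by_cases hGa : ∀ i, σ i ≠ i → G.Adj (σ i) i
    · have hnotinv : ¬ ∀ v, σ (σ v) = v := fun h =>
        hσ (Finset.mem_filter.2 ⟨Finset.mem_univ _, h, hGa⟩)
      push_neg at hnotinv
      obtain ⟨i₀, h2⟩ := hnotinv
      by_cases hall : ∀ a : ℕ, T.Adj ((⇑σ)^[a+1] i₀) ((⇑σ)^[a] i₀)
      · exact absurd (ACP_no_long_cycle hT.IsAcyclic σ i₀ h2 hall) not_false
      · push_neg at hall
        obtain ⟨a, hnTa⟩ := hall
        have horb := ACP_orbit σ i₀ h2 a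
        rw [Function.iterate_succ_apply'] at hnTa
        have hxadj : G.Adj (σ ((⇑σ)^[a] i₀)) ((⇑σ)^[a] i₀) := hGa _ horb.1
        have hmem : s(σ ((⇑σ)^[a] i₀), (⇑σ)^[a] i₀) ∈ G.edgeSet \ T.edgeSet :=
          ⟨G.mem_edgeSet.2 hxadj, fun hm => hnTa (T.mem_edgeSet.1 hm)⟩
        obtain ⟨j, hj⟩ := (hcover _).1 hmem
        exact ACP_flip_zero hTG hinj hnT hne σ _ j horb.1 horb.2 hj
    · push_neg at hGa
      obtain ⟨i, hi1, hi2⟩ := hGa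
      refine Finset.sum_eq_zero fun s _ => ?_
      refine Finset.prod_eq_zero (Finset.mem_univ i) ?_
      rw [charmatrix_apply_ne _ _ _ hi1, ACP_nonG T e hTG hGe s hi2, map_zero, neg_zero]
  have hcard2 : Fintype.card (Fin m → ℤˣ) = 2 ^ m := by
    rw [Fintype.card_fun]
    simp
  have hval : ∀ σ ∈ S, ∑ s : Fin m → ℤˣ, ∏ i, (hermAdjP T e s).charmatrix (σ i) i
      = (2^m : ℕ) • (X : Polynomial ℂ) ^ (n - σ.support.card) := by
    intro σ hσ
    obtain ⟨-, hσσ, hσG⟩ := Finset.mem_filter.mp hσ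
    rw [Finset.sum_congr rfl fun s _ => ACP_prod_invol hTG hinj hnT hne hGe hcover σ hσσ hσG s,
      Finset.sum_const, Finset.card_univ, hcard2]
  have hsum2 : ∑ s : Fin m → ℤˣ, (hermAdjP T e s).charpoly
      = (2^m : ℕ) • ∑ σ ∈ S, Equiv.Perm.sign σ • (X : Polynomial ℂ) ^ (n - σ.support.card) := by
    rw [hswap,
      ← Finset.sum_subset (Finset.subset_univ S) (fun σ _ hσ => by rw [hvanish σ hσ, smul_zero]),
      Finset.smul_sum]
    refine Finset.sum_congr rfl fun σ hσ => ?_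
    rw [hval σ hσ, smul_comm]
  rw [hsum2, ← Nat.cast_smul_eq_nsmul ℂ, smul_smul]
  push_cast
  rw [div_mul_cancel₀ _ (pow_ne_zero _ two_ne_zero : (2:ℂ)^m ≠ 0), one_smul]
  -- now: ∑ σ ∈ S, sign σ • X ^ (n - σ.support.card) = map matchingPoly
  have hcardle : ∀ M : Finset (Sym2 V), IsMatchingSet G M → M.card ≤ n := by
    intro M hM
    refine le_trans (Finset.card_le_card_of_injOn (fun ed => ed.out.1)
      (fun ed _ => Finset.mem_univ _) ?_) (le_of_eq Finset.card_univ)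
    intro e1 h1 e2 h2 heq
    by_contra hne12
    have heq' : e1.out.1 = e2.out.1 := heq
    exact hM.2 h1 h2 hne12 e1.out.1 (Sym2.out_fst_mem e1)
      (by rw [heq']; exact Sym2.out_fst_mem e2)
  have hnum : ∀ k, numMatchings G k = (A.filter (fun M => M.card = k)).card := by
    intro k
    rw [numMatchings, Nat.card_eq_fintype_card, Fintype.card_subtype]
    congr 1
    ext M
    simp [hA, Finset.mem_filter, and_comm]
  have hRHS : (matchingPoly G).map (algebraMap ℝ ℂ)
      = ∑ M ∈ A, C ((-1:ℂ)^M.card) * X ^ (n - 2 * M.card) := by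
    calc (matchingPoly G).map (algebraMap ℝ ℂ)
        = ∑ k ∈ Finset.range (n+1), C ((-1:ℂ)^k * (numMatchings G k : ℂ)) * X ^ (n - 2*k) := by
          rw [matchingPoly, Polynomial.map_sum]
          refine Finset.sum_congr rfl fun k _ => ?_
          rw [Polynomial.map_mul, Polynomial.map_C, Polynomial.map_pow, Polynomial.map_X]
          norm_num
          exact Or.inl rfl
      _ = ∑ k ∈ Finset.range (n+1), ∑ M ∈ A.filter (fun M => M.card = k),
            C ((-1:ℂ)^M.card) * X ^ (n - 2*M.card) := by
          refine Finset.sum_congr rfl fun k _ => ?_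
          have hconst : ∀ M ∈ A.filter (fun M => M.card = k),
              C ((-1:ℂ)^M.card) * X ^ (n - 2*M.card) = C ((-1:ℂ)^k) * X ^ (n - 2*k) := by
            intro M hM; rw [(Finset.mem_filter.mp hM).2]
          rw [Finset.sum_congr rfl hconst, Finset.sum_const, ← hnum k, nsmul_eq_mul,
            Polynomial.C_mul, ← Polynomial.C_eq_natCast]
          ring
      _ = ∑ M ∈ A, C ((-1:ℂ)^M.card) * X ^ (n - 2*M.card) := by
          refine Finset.sum_fiberwise_of_maps_to (fun M hM => ?_) _
          rw [Finset.mem_range]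
          have := hcardle M (Finset.mem_filter.mp hM).2
          omega
  rw [hRHS]
  have hedge_eq : ∀ (σ : Equiv.Perm V), (∀ v, σ (σ v) = v) →
      ∀ i v : V, v ∈ s(i, σ i) → s(i, σ i) = s(v, σ v) := by
    intro σ hσσ i v hv
    rcases Sym2.mem_iff.mp hv with rfl | rfl
    · rfl
    · rw [hσσ i]
      exact Sym2.eq_swap
  refine Finset.sum_bij (fun σ _ => σ.support.image (fun i => s(i, σ i))) ?_ ?_ ?_ ?_
  · -- membership
    intro σ hσ
    obtain ⟨-, hσσ, hσG⟩ := Finset.mem_filter.mp hσ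
    rw [hA, Finset.mem_filter]
    refine ⟨Finset.mem_univ _, ?_, ?_⟩
    · intro ed hed
      rw [Finset.mem_coe, Finset.mem_image] at hed
      obtain ⟨i, hi, rfl⟩ := hed
      exact G.mem_edgeSet.2 (hσG i (Equiv.Perm.mem_support.mp hi)).symm
    · intro e1 he1 e2 he2 hne12 v hv1 hv2
      apply hne12
      rw [Finset.mem_coe, Finset.mem_image] at he1 he2
      obtain ⟨i1, hi1, rfl⟩ := he1
      obtain ⟨i2, hi2, rfl⟩ := he2
      rw [hedge_eq σ hσσ i1 v hv1, hedge_eq σ hσσ i2 v hv2]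
  · -- injectivity
    intro σ hσ1 τ hσ2 himg
    obtain ⟨-, hσσ, hσG⟩ := Finset.mem_filter.mp hσ1
    obtain ⟨-, hττ, hτG⟩ := Finset.mem_filter.mp hσ2
    have himg' : Finset.image (fun i => s(i, σ i)) σ.support
        = Finset.image (fun i => s(i, τ i)) τ.support := himg
    have hcov : ∀ (ρ : Equiv.Perm V), ∀ v, ρ v ≠ v →
        s(v, ρ v) ∈ ρ.support.image (fun i => s(i, ρ i)) := fun ρ v hv =>
      Finset.mem_image_of_mem _ (Equiv.Perm.mem_support.mpr hv)
    have hmem_eq : ∀ (ρ : Equiv.Perm V), (∀ v, ρ (ρ v) = v) →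
        ∀ ed ∈ ρ.support.image (fun i => s(i, ρ i)), ∀ v, v ∈ ed → ed = s(v, ρ v) := by
      intro ρ hρρ ed hed v hv
      obtain ⟨i, hi, rfl⟩ := Finset.mem_image.mp hed
      exact hedge_eq ρ hρρ i v hv
    apply Equiv.ext
    intro v
    by_cases hσv : σ v = v <;> by_cases hτv : τ v = v
    · rw [hσv, hτv]
    · exfalso
      have h1 := hcov τ v hτv
      rw [← himg'] at h1
      have h2 := hmem_eq σ hσσ _ h1 v (Sym2.mem_mk_left _ _)
      rw [hσv] at h2
      rcases Sym2.eq_iff.mp h2 with ⟨-, h3⟩ | ⟨-, h3⟩ <;> exact hτv h3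
    · exfalso
      have h1 := hcov σ v hσv
      rw [himg'] at h1
      have h2 := hmem_eq τ hττ _ h1 v (Sym2.mem_mk_left _ _)
      rw [hτv] at h2
      rcases Sym2.eq_iff.mp h2 with ⟨-, h3⟩ | ⟨-, h3⟩ <;> exact hσv h3
    · have h1 := hcov σ v hσv
      rw [himg'] at h1
      have h2 := hmem_eq τ hττ _ h1 v (Sym2.mem_mk_left _ _)
      rcases Sym2.eq_iff.mp h2 with ⟨-, h3⟩ | ⟨h3, h4⟩
      · exact h3
      · exact absurd h3.symm hτv
  · -- surjectivity
    intro M hM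
    have hM2 : IsMatchingSet G M := by
      have := Finset.mem_filter.mp hM
      exact this.2
    have huniq : ∀ v : V, ∀ e1, e1 ∈ M → ∀ e2, e2 ∈ M → v ∈ e1 → v ∈ e2 → e1 = e2 := by
      intro v e1 h1 e2 h2 hv1 hv2
      by_contra hne12
      exact hM2.2 h1 h2 hne12 v hv1 hv2
    set f : V → V := fun v =>
      if h : ∃ ed, ed ∈ M ∧ v ∈ ed then Sym2.Mem.other' h.choose_spec.2 else v with hf
    have hfspec : ∀ v (h : ∃ ed, ed ∈ M ∧ v ∈ ed), s(v, f v) = h.choose := by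
      intro v h
      rw [hf]
      simp only
      rw [dif_pos h]
      exact Sym2.other_spec' h.choose_spec.2
    have hffix : ∀ v, ¬(∃ ed, ed ∈ M ∧ v ∈ ed) → f v = v := by
      intro v h; rw [hf]; simp only; rw [dif_neg h]
    have hfne : ∀ v (h : ∃ ed, ed ∈ M ∧ v ∈ ed), f v ≠ v := by
      intro v h hfv
      have h1 := hfspec v h
      rw [hfv] at h1
      have hedm : h.choose ∈ G.edgeSet := hM2.1 h.choose_spec.1
      rw [← h1] at hedm
      exact G.irrefl (G.mem_edgeSet.1 hedm)
    have hinvol : Function.Involutive f := by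
      intro v
      by_cases h : ∃ ed, ed ∈ M ∧ v ∈ ed
      · have h1 := hfspec v h
        have hfvmem : f v ∈ h.choose := by rw [← h1]; exact Sym2.mem_mk_right _ _
        have h' : ∃ ed, ed ∈ M ∧ f v ∈ ed := ⟨h.choose, h.choose_spec.1, hfvmem⟩
        have h2 := hfspec (f v) h'
        have hch : h'.choose = h.choose :=
          huniq (f v) _ h'.choose_spec.1 _ h.choose_spec.1 h'.choose_spec.2 hfvmem
        rw [hch, ← h1] at h2
        rcases Sym2.eq_iff.mp h2 with ⟨h3, h4⟩ | ⟨h3, h4⟩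
        · rw [h4, h3]
        · exact h4
      · have h1 := hffix v h
        rw [h1]
        exact h1
    refine ⟨hinvol.toPerm _, ?_, ?_⟩
    · rw [hS, Finset.mem_filter]
      refine ⟨Finset.mem_univ _, fun v => ?_, fun v hv => ?_⟩
      · simp only [Function.Involutive.coe_toPerm]
        exact hinvol v
      · simp only [Function.Involutive.coe_toPerm] at hv ⊢
        have h : ∃ ed, ed ∈ M ∧ v ∈ ed := by
          by_contra hno
          exact hv (hffix v hno)
        have h1 := hfspec v h
        have hedm : h.choose ∈ G.edgeSet := hM2.1 h.choose_spec.1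
        rw [← h1] at hedm
        exact (G.mem_edgeSet.1 hedm).symm
    · ext ed
      constructor
      · intro hed
        obtain ⟨i, hi, rfl⟩ := Finset.mem_image.mp hed
        have hi' : f i ≠ i := by
          simpa [Function.Involutive.coe_toPerm] using Equiv.Perm.mem_support.mp hi
        have h : ∃ ed, ed ∈ M ∧ i ∈ ed := by
          by_contra hno
          exact hi' (hffix i hno)
        have h1 := hfspec i h
        have : s(i, (hinvol.toPerm f) i) = h.choose := by
          simpa [Function.Involutive.coe_toPerm] using h1
        rw [this]
        exact h.choose_spec.1
      · intro hed
        have hv : ed.out.1 ∈ ed := Sym2.out_fst_mem ed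
        have h : ∃ ed', ed' ∈ M ∧ ed.out.1 ∈ ed' := ⟨ed, hed, hv⟩
        have hch : h.choose = ed := huniq _ _ h.choose_spec.1 _ hed h.choose_spec.2 hv
        have hs := hfspec _ h
        refine Finset.mem_image.mpr ⟨ed.out.1, ?_, ?_⟩
        · rw [Equiv.Perm.mem_support]
          simp only [Function.Involutive.coe_toPerm]
          exact hfne _ h
        · simp only [Function.Involutive.coe_toPerm]
          rw [hs, hch]
  · -- weights
    intro σ hσ
    obtain ⟨-, hσσ, hσG⟩ := Finset.mem_filter.mp hσ
    have hσ2 : σ * σ = 1 := Equiv.ext fun v => hσσ v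
    obtain ⟨k, hk1, hk2⟩ := ACP_sign σ hσ2
    have hcard : σ.support.card = 2 * (σ.support.image (fun i => s(i, σ i))).card := by
      rw [Finset.card_eq_sum_card_image (fun i => s(i, σ i)) σ.support]
      have hfib : ∀ ed ∈ σ.support.image (fun i => s(i, σ i)),
          (σ.support.filter (fun i => s(i, σ i) = ed)).card = 2 := by
        intro ed hed
        obtain ⟨i₀, hi₀, rfl⟩ := Finset.mem_image.mp hed
        have hset : σ.support.filter (fun i => s(i, σ i) = s(i₀, σ i₀)) = {i₀, σ i₀} := by
          ext i
          simp only [Finset.mem_filter, Finset.mem_insert, Finset.mem_singleton]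
          constructor
          · rintro ⟨hi, heq⟩
            rcases Sym2.eq_iff.mp heq with ⟨h3, -⟩ | ⟨h3, -⟩
            · left; exact h3
            · right; exact h3
          · intro h
            rcases h with rfl | rfl
            · exact ⟨hi₀, rfl⟩
            · refine ⟨?_, ?_⟩
              · rw [Equiv.Perm.mem_support, hσσ i₀]
                exact Ne.symm (Equiv.Perm.mem_support.mp hi₀)
              · rw [hσσ i₀]
                exact Sym2.eq_swap
        rw [hset]
        exact Finset.card_pair (Ne.symm (Equiv.Perm.mem_support.mp hi₀))
      rw [Finset.sum_congr rfl hfib, Finset.sum_const, smul_eq_mul, mul_comm]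
    have hkimg : k = (σ.support.image (fun i => s(i, σ i))).card := by omega
    rw [hk2, ← hkimg, hcard, ← hkimg]
    simp only [Units.smul_def, zsmul_eq_mul, map_pow, Polynomial.C_neg, Polynomial.C_1]
    push_cast
    ring

end MAIN
end

section
/- Let G be a finite connected simple graph, T a spanning tree of G, and σ a partial orientation of G with respect to T. Then G_T^σ is switching equivalent to G (regarded as the mixed graph with no oriented edges, whose Hermitian adjacency matrix is the ordinary adjacency matrix A(G)) if and only if G = T, i.e., every edge of G lies in T. -/
variable {V : Type*}

open Classical in
/-- The Hermitian adjacency matrix of the partial orientation `G_T^σ`. -/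
noncomputable def mixedHerm (G T : SimpleGraph V) (σ : V → V → ℤ) : Matrix V V ℂ :=
  Matrix.of fun u v =>
    if T.Adj u v then 1 else if G.Adj u v then Complex.I * (σ u v : ℂ) else 0

/-- Two Hermitian adjacency matrices are switching equivalent: there is a diagonal matrix `S`
with diagonal entries in `{1, -1, i, -i}` such that `S⁻¹ M S = N` or
`S⁻¹ M S = conj N` (the Hermitian adjacency matrix of the converse). -/
noncomputable def SwitchEquiv [Fintype V] [DecidableEq V] (M N : Matrix V V ℂ) : Prop :=
  ∃ d : V → ℂ,
    (∀ v, d v = 1 ∨ d v = -1 ∨ d v = Complex.I ∨ d v = -Complex.I) ∧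
    ((Matrix.diagonal d)⁻¹ * M * Matrix.diagonal d = N ∨
     (Matrix.diagonal d)⁻¹ * M * Matrix.diagonal d = N.map (starRingEnd ℂ))

open Classical in
/-- For a connected graph `G` with spanning tree `T` and a partial orientation
`σ` of `G` with respect to `T`, `G_T^σ` is switching equivalent to the unoriented graph `G`
if and only if `G = T`. -/
theorem switchEquiv_unoriented_iff_eq_tree {V : Type*} [Fintype V] [DecidableEq V]
    (G T : SimpleGraph V) (hG : G.Connected) (hTG : T ≤ G) (hT : T.IsTree)
    (σ : V → V → ℤ)
    (hskew : ∀ u v, σ v u = -σ u v)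
    (hval : ∀ u v, G.Adj u v → ¬ T.Adj u v → σ u v = 1 ∨ σ u v = -1) :
    SwitchEquiv (mixedHerm G T σ) (G.adjMatrix ℂ) ↔ G = T := by
  classical
  constructor
  · rintro ⟨d, hd, heq⟩
    have hdne : ∀ v, d v ≠ 0 := by
      intro v
      rcases hd v with h|h|h|h <;> rw [h] <;> simp [Complex.I_ne_zero]
    have hmapN : (G.adjMatrix ℂ).map (starRingEnd ℂ) = G.adjMatrix ℂ := by
      ext u v
      simp only [Matrix.map_apply, SimpleGraph.adjMatrix_apply]
      split <;> simp
    have heq' : (Matrix.diagonal d)⁻¹ * mixedHerm G T σ * Matrix.diagonal d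
        = G.adjMatrix ℂ := by
      rcases heq with h|h
      · exact h
      · rw [hmapN] at h; exact h
    have hinv : (Matrix.diagonal d)⁻¹ = Matrix.diagonal (fun v => (d v)⁻¹) := by
      apply Matrix.inv_eq_left_inv
      rw [Matrix.diagonal_mul_diagonal]
      have : (fun i => (d i)⁻¹ * d i) = fun _ => (1 : ℂ) :=
        funext fun i => inv_mul_cancel₀ (hdne i)
      rw [this, Matrix.diagonal_one]
    rw [hinv] at heq'
    have hent : ∀ u v, (d u)⁻¹ * mixedHerm G T σ u v * d v = G.adjMatrix ℂ u v := by
      intro u v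
      have h := Matrix.ext_iff.2 heq' u v
      rwa [Matrix.mul_diagonal, Matrix.diagonal_mul] at h
    have htree : ∀ u v, T.Adj u v → d u = d v := by
      intro u v huv
      have h := hent u v
      have hadj : G.Adj u v := hTG huv
      rw [mixedHerm] at h
      simp only [Matrix.of_apply, if_pos huv, SimpleGraph.adjMatrix_apply,
        if_pos hadj, mul_one] at h
      field_simp at h
      exact ((div_eq_one_iff_eq (hdne u)).1 h).symm
    have hconst : ∀ u v : V, d u = d v := by
      intro u v
      obtain ⟨w⟩ := hT.isConnected.preconnected u v
      induction w with
      | nil => rfl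
      | cons h p ih => exact (htree _ _ h).trans ih
    have hsub : G ≤ T := by
      intro u v huv
      by_contra hTuv
      have h := hent u v
      rw [mixedHerm] at h
      simp only [Matrix.of_apply, if_neg hTuv, if_pos huv,
        SimpleGraph.adjMatrix_apply] at h
      rw [hconst u v, mul_comm ((d v)⁻¹), mul_assoc,
        inv_mul_cancel₀ (hdne v), mul_one] at h
      rcases hval u v huv hTuv with h1|h1 <;> rw [h1] at h <;>
        simp [Complex.ext_iff] at h
    exact le_antisymm hsub hTG
  · intro h
    subst h
    refine ⟨fun _ => 1, fun v => Or.inl rfl, Or.inl ?_⟩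
    have : Matrix.diagonal (fun _ : V => (1 : ℂ)) = 1 := Matrix.diagonal_one
    rw [this, inv_one, one_mul, mul_one]
    ext u v
    by_cases hadj : G.Adj u v <;> simp [mixedHerm, hadj]
end

section
/- Let G be a finite connected simple graph, T a spanning tree of G, and σ a partial orientation of G with respect to T. Then G_T^σ is switching equivalent to some oriented graph of G (a mixed graph on G in which every edge is oriented, so its Hermitian adjacency matrix has all its nonzero entries in {i, −i}) if and only if for every even cycle C of G, T contains at most |C| − 2 edges of C, where |C| denotes the number of edges of C. -/
variable {V : Type*}

open Classical in
/-- The Hermitian adjacency matrix of a complete orientation `G^τ`. -/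
noncomputable def orientHerm (G : SimpleGraph V) (τ : V → V → ℤ) : Matrix V V ℂ :=
  Matrix.of fun u v => if G.Adj u v then Complex.I * (τ u v : ℂ) else 0

noncomputable def wprod {G : SimpleGraph V} (M : Matrix V V ℂ) : {u v : V} → G.Walk u v → ℂ
  | _, _, SimpleGraph.Walk.nil => 1
  | _, _, @SimpleGraph.Walk.cons _ _ u b _ _ p => M u b * wprod M p

@[simp] lemma wprod_nil {G : SimpleGraph V} (M : Matrix V V ℂ) {u : V} :
    wprod M (SimpleGraph.Walk.nil : G.Walk u u) = 1 := rfl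

@[simp] lemma wprod_cons {G : SimpleGraph V} (M : Matrix V V ℂ) {u b v : V}
    (h : G.Adj u b) (p : G.Walk b v) :
    wprod M (SimpleGraph.Walk.cons h p) = M u b * wprod M p := rfl

lemma wprod_map_conj {G : SimpleGraph V} (M : Matrix V V ℂ) {u v : V} (p : G.Walk u v) :
    wprod (M.map (starRingEnd ℂ)) p = (starRingEnd ℂ) (wprod M p) := by
  induction p with
  | nil => simp
  | cons h p ih => simp [ih, Matrix.map_apply]

lemma wprod_similar {G : SimpleGraph V} (M N : Matrix V V ℂ) (d : V → ℂ)
    (hd : ∀ v, d v ≠ 0) (hN : ∀ a b, N a b = (d a)⁻¹ * M a b * d b)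
    {u v : V} (p : G.Walk u v) :
    wprod N p = (d u)⁻¹ * wprod M p * d v := by
  induction p with
  | nil =>
    rw [wprod_nil]
    field_simp
    rw [wprod_nil, mul_one]
    exact (div_self (hd _)).symm
  | @cons a b c h p ih =>
    simp only [wprod_cons, ih, hN]
    field_simp
    linear_combination M a b * wprod M p * d c * (d a)⁻¹ * mul_inv_cancel₀ (hd b)

open Classical in
lemma wprod_orient_sq {G : SimpleGraph V} (τ : V → V → ℤ)
    (hτ : ∀ u v, G.Adj u v → τ u v = 1 ∨ τ u v = -1)
    {u v : V} (p : G.Walk u v) :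
    (wprod (orientHerm G τ) p) ^ 2 = (-1 : ℂ) ^ p.length := by
  induction p with
  | nil => simp
  | @cons a b c h p ih =>
    have hab : orientHerm G τ a b = Complex.I * (τ a b : ℂ) := by
      simp [orientHerm, h]
    have : (orientHerm G τ a b) ^ 2 = -1 := by
      rw [hab, mul_pow, Complex.I_sq]
      rcases hτ a b h with h' | h' <;> rw [h'] <;> norm_num
    rw [wprod_cons, mul_pow, this, ih, SimpleGraph.Walk.length_cons, pow_succ]
    ring

open Classical in
lemma wprod_mixed_sq {G T : SimpleGraph V} (hTG : T ≤ G) (σ : V → V → ℤ)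
    (hval : ∀ u v, G.Adj u v → ¬ T.Adj u v → σ u v = 1 ∨ σ u v = -1)
    {u v : V} (p : G.Walk u v) :
    (wprod (mixedHerm G T σ) p) ^ 2
      = (-1 : ℂ) ^ (p.edges.filter fun x => ¬ x ∈ T.edgeSet).length := by
  induction p with
  | nil => simp
  | @cons a b c h p ih =>
    by_cases ht : T.Adj a b
    · have hab : mixedHerm G T σ a b = 1 := by simp [mixedHerm, ht]
      have he : s(a, b) ∈ T.edgeSet := ht
      simp [SimpleGraph.Walk.edges_cons, List.filter_cons, he, hab, ih]
    · have hab : mixedHerm G T σ a b = Complex.I * (σ a b : ℂ) := by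
        simp [mixedHerm, ht, h]
      have he : ¬ s(a, b) ∈ T.edgeSet := ht
      have hsq : (mixedHerm G T σ a b) ^ 2 = -1 := by
        rw [hab, mul_pow, Complex.I_sq]
        rcases hval a b h ht with h' | h' <;> rw [h'] <;> norm_num
      rw [wprod_cons, mul_pow, hsq, ih, SimpleGraph.Walk.edges_cons, List.filter_cons]
      simp only [he, decide_false, decide_not]
      simp [pow_succ]

lemma tree_path_length_eq_dist {T : SimpleGraph V} (hT : T.IsTree) {a b : V}
    {p : T.Walk a b} (hp : p.IsPath) : p.length = T.dist a b := by
  obtain ⟨q, hq, hql⟩ := (hT.isConnected a b).exists_path_of_dist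
  rw [(hT.existsUnique_path a b).unique hp hq, hql]

lemma tree_adj_dist [DecidableEq V] {T : SimpleGraph V} (hT : T.IsTree) (r : V) {u v : V} (h : T.Adj u v) :
    T.dist r u + 1 = T.dist r v ∨ T.dist r v + 1 = T.dist r u := by
  obtain ⟨p, hp, hpl⟩ := (hT.isConnected r u).exists_path_of_dist
  by_cases hv : v ∈ p.support
  · right
    have h1 : (p.takeUntil v hv).IsPath := hp.takeUntil hv
    have h2 : (p.dropUntil v hv).IsPath := hp.dropUntil hv
    have hone : (SimpleGraph.Walk.cons h.symm SimpleGraph.Walk.nil : T.Walk v u).IsPath := by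
      simp [SimpleGraph.Walk.cons_isPath_iff, h.ne']
    have e1 : p.dropUntil v hv = SimpleGraph.Walk.cons h.symm SimpleGraph.Walk.nil :=
      (hT.existsUnique_path v u).unique h2 hone
    have e2 := congrArg SimpleGraph.Walk.length (p.take_spec hv)
    rw [SimpleGraph.Walk.length_append, e1] at e2
    have e3 : (p.takeUntil v hv).length = T.dist r v := tree_path_length_eq_dist hT h1
    simp only [SimpleGraph.Walk.length_cons, SimpleGraph.Walk.length_nil] at e2
    omega
  · left
    set q : T.Walk r v := (SimpleGraph.Walk.cons h.symm p.reverse).reverse with hqdef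
    have hq : q.IsPath := by
      apply SimpleGraph.Walk.IsPath.reverse
      rw [SimpleGraph.Walk.cons_isPath_iff]
      exact ⟨hp.reverse, by simpa using hv⟩
    have hl : q.length = p.length + 1 := by simp [hqdef]
    have := tree_path_length_eq_dist hT hq
    omega

lemma tree_walk_parity [DecidableEq V] {T : SimpleGraph V} (hT : T.IsTree) (r : V) {a b : V}
    (p : T.Walk a b) : Even (T.dist r a + p.length) ↔ Even (T.dist r b) := by
  induction p with
  | nil => simp
  | @cons x y z h p ih =>
    have h2 := tree_adj_dist hT r h
    rw [SimpleGraph.Walk.length_cons]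
    simp only [Nat.even_iff] at ih ⊢
    omega


open Classical in
/-- For a connected graph `G` with spanning tree `T` and a partial orientation
`σ` of `G` with respect to `T`, `G_T^σ` is switching equivalent to some complete orientation
of `G` if and only if for every even cycle `C` of `G`, `T` contains at most `|C| - 2`
edges of `C`. -/
theorem switchEquiv_orientation_iff_even_cycles {V : Type*} [Fintype V] [DecidableEq V]
    (G T : SimpleGraph V) (hG : G.Connected) (hTG : T ≤ G) (hT : T.IsTree)
    (σ : V → V → ℤ)
    (hskew : ∀ u v, σ v u = -σ u v)
    (hval : ∀ u v, G.Adj u v → ¬ T.Adj u v → σ u v = 1 ∨ σ u v = -1) :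
    (∃ τ : V → V → ℤ,
        (∀ u v, τ v u = -τ u v) ∧
        (∀ u v, G.Adj u v → τ u v = 1 ∨ τ u v = -1) ∧
        SwitchEquiv (mixedHerm G T σ) (orientHerm G τ)) ↔
      ∀ (v : V) (c : G.Walk v v), c.IsCycle → Even c.length →
        (c.edges.filter fun x => x ∈ T.edgeSet).length ≤ c.length - 2 := by
  constructor
  · rintro ⟨τ, hτskew, hτval, d, hd4, heq⟩ v c hc hev
    by_contra hcon
    push_neg at hcon
    have hlen3 := hc.three_le_length
    have hed : c.edges.length = c.length := c.length_edges
    have hsum := c.edges.length_eq_length_filter_add (fun x => decide (x ∈ T.edgeSet))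
    simp only [← decide_not] at hsum
    have hk1 : (c.edges.filter fun x => ¬ x ∈ T.edgeSet).length ≤ 1 := by omega
    rcases Nat.lt_or_ge (c.edges.filter fun x => ¬ x ∈ T.edgeSet).length 1 with hk | hk
    · -- all edges in the tree: contradiction with acyclicity
      have h0 : (c.edges.filter fun x => ¬ x ∈ T.edgeSet) = [] :=
        List.length_eq_zero_iff.mp (by omega)
      have hall : ∀ e ∈ c.edges, e ∈ T.edgeSet := by
        intro e he
        by_contra hne
        have := List.filter_eq_nil_iff.mp h0 e he
        simp [hne] at this
      exact hT.IsAcyclic _ (hc.transfer hall)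
    · have hk' : (c.edges.filter fun x => ¬ x ∈ T.edgeSet).length = 1 := le_antisymm hk1 hk
      have hsq1 : (wprod (mixedHerm G T σ) c) ^ 2 = -1 := by
        rw [wprod_mixed_sq hTG σ hval c, hk', pow_one]
      have hd0 : ∀ v, d v ≠ 0 := by
        intro w
        rcases hd4 w with h | h | h | h <;> rw [h] <;>
          simp [Complex.I_ne_zero]
      have hinv : (Matrix.diagonal d)⁻¹ = Matrix.diagonal fun v => (d v)⁻¹ := by
        apply Matrix.inv_eq_left_inv
        rw [Matrix.diagonal_mul_diagonal]
        ext i j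
        by_cases hij : i = j <;>
          simp [hij, Matrix.one_apply, inv_mul_cancel₀ (hd0 j), Matrix.diagonal_apply]
      have hEnt : ∀ (M : Matrix V V ℂ) (a b : V),
          ((Matrix.diagonal d)⁻¹ * M * Matrix.diagonal d) a b = (d a)⁻¹ * M a b * d b := by
        intro M a b
        rw [hinv, Matrix.mul_diagonal, Matrix.diagonal_mul]
      have horsq : (wprod (orientHerm G τ) c) ^ 2 = 1 := by
        rw [wprod_orient_sq τ hτval c, hev.neg_one_pow]
      rcases heq with h1 | h1
      · have hN : ∀ a b, (orientHerm G τ) a b = (d a)⁻¹ * mixedHerm G T σ a b * d b := by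
          intro a b; rw [← h1, hEnt]
        have hw := wprod_similar (mixedHerm G T σ) (orientHerm G τ) d hd0 hN c
        rw [hw, mul_pow, mul_pow, hsq1] at horsq
        have hvne := hd0 v
        field_simp at horsq
        norm_num at horsq
      · have hN : ∀ a b, ((orientHerm G τ).map (starRingEnd ℂ)) a b
            = (d a)⁻¹ * mixedHerm G T σ a b * d b := by
          intro a b; rw [← h1, hEnt]
        have hw := wprod_similar (mixedHerm G T σ) ((orientHerm G τ).map (starRingEnd ℂ))
          d hd0 hN c
        have hconj : (wprod ((orientHerm G τ).map (starRingEnd ℂ)) c) ^ 2 = 1 := by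
          rw [wprod_map_conj, ← map_pow, wprod_orient_sq τ hτval c, hev.neg_one_pow, map_one]
        rw [hw, mul_pow, mul_pow, hsq1] at hconj
        have hvne := hd0 v
        field_simp at hconj
        norm_num at hconj
  · intro hcyc
    obtain ⟨r⟩ : Nonempty V := hG.nonempty
    -- parity of adjacent vertices in the tree
    have hA : ∀ u v : V, T.Adj u v → (Even (T.dist r u) ↔ ¬ Even (T.dist r v)) := by
      intro u v h
      have := tree_adj_dist hT r h
      simp only [Nat.even_iff] at *
      omega
    -- parity across non-tree edges
    have hB : ∀ u v : V, G.Adj u v → ¬ T.Adj u v →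
        (Even (T.dist r u) ↔ Even (T.dist r v)) := by
      intro u v hg ht
      obtain ⟨p, hp, hpl⟩ := (hT.isConnected u v).exists_path_of_dist
      have hpar := tree_walk_parity hT r p
      have hsub : ∀ e ∈ p.edges, e ∈ G.edgeSet := fun e he => SimpleGraph.edgeSet_mono hTG (p.edges_subset_edgeSet he)
      have hpe : Even p.length := by
        by_contra hodd
        set c : G.Walk v v := SimpleGraph.Walk.cons hg.symm (p.transfer G hsub) with hcdef
        have hcyc' : c.IsCycle := by
          rw [hcdef, SimpleGraph.Walk.cons_isCycle_iff]
          constructor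
          · exact hp.transfer hsub
          · rw [SimpleGraph.Walk.edges_transfer]
            intro hmem
            exact ht (((SimpleGraph.mem_edgeSet _).mp (p.edges_subset_edgeSet hmem)).symm)
        have hclen : c.length = p.length + 1 := by
          simp [hcdef]
        have hceven : Even c.length := by
          rw [hclen]
          simpa [Nat.even_add_one] using hodd
        have := hcyc v c hcyc' hceven
        have hce : c.edges = s(v, u) :: p.edges := by
          simp [hcdef, SimpleGraph.Walk.edges_transfer]
        have hvu : ¬ s(v, u) ∈ T.edgeSet := fun hx => ht (SimpleGraph.Adj.symm hx)
        have hfl : (c.edges.filter fun x => x ∈ T.edgeSet).length = p.length := by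
          rw [hce, List.filter_cons]
          simp only [hvu, decide_false, if_false]
          rw [List.filter_eq_self.mpr (fun a ha => by
            simpa using p.edges_subset_edgeSet ha)]
          exact p.length_edges
        rw [hfl, hclen] at this
        have hp0 : p.length ≠ 0 := fun h0 => hodd (by simp [h0])
        omega
      rw [← hpar]
      rw [Nat.even_add]
      simp [hpe]
    set dd : V → ℂ := fun v => if Even (T.dist r v) then 1 else Complex.I with hdd
    set ee : V → ℂ := fun v => if Even (T.dist r v) then 1 else -Complex.I with hee
    set τ : V → V → ℤ :=
      fun u v => if T.Adj u v then (if Even (T.dist r v) then -1 else 1) else σ u v with hτ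
    have hed : ∀ v, ee v * dd v = 1 := by
      intro v
      by_cases h : Even (T.dist r v) <;> simp [hdd, hee, h, Complex.I_mul_I]
    have hinv : (Matrix.diagonal dd)⁻¹ = Matrix.diagonal ee := by
      apply Matrix.inv_eq_left_inv
      rw [Matrix.diagonal_mul_diagonal]
      ext i j
      by_cases hij : i = j <;>
        simp [hij, Matrix.one_apply, hed j, Matrix.diagonal_apply]
    refine ⟨τ, ?_, ?_, dd, ?_, Or.inl ?_⟩
    · intro u v
      by_cases h : T.Adj u v
      · have h' : T.Adj v u := h.symm
        have := hA u v h
        by_cases hb : Even (T.dist r v)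
        · have ha : ¬ Even (T.dist r u) := by tauto
          simp [hτ, h, h', hb, ha]
        · have ha : Even (T.dist r u) := by tauto
          simp [hτ, h, h', hb, ha]
      · have h' : ¬ T.Adj v u := fun hx => h hx.symm
        simp [hτ, h, h', hskew u v]
    · intro u v hg
      by_cases h : T.Adj u v
      · by_cases hb : Even (T.dist r v) <;> simp [hτ, h, hb]
      · simpa [hτ, h] using hval u v hg h
    · intro v
      by_cases h : Even (T.dist r v) <;> simp [hdd, h]
    · rw [hinv]
      ext a b
      rw [Matrix.mul_diagonal, Matrix.diagonal_mul]
      by_cases ht : T.Adj a b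
      · have hg : G.Adj a b := hTG ht
        have hpar := hA a b ht
        by_cases hb : Even (T.dist r b)
        · have ha : ¬ Even (T.dist r a) := by tauto
          simp [mixedHerm, orientHerm, hτ, ht, hg, hb, ha, hdd, hee]
        · have ha : Even (T.dist r a) := by tauto
          simp [mixedHerm, orientHerm, hτ, ht, hg, hb, ha, hdd, hee]
      · by_cases hg : G.Adj a b
        · have hpar := hB a b hg ht
          by_cases hb : Even (T.dist r b)
          · have ha : Even (T.dist r a) := by tauto
            simp [mixedHerm, orientHerm, hτ, ht, hg, hb, ha, hdd, hee]
          · have ha : ¬ Even (T.dist r a) := by tauto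
            simp [mixedHerm, orientHerm, hτ, ht, hg, hb, ha, hdd, hee]
            rw [show Complex.I * (Complex.I * (σ a b : ℂ)) * Complex.I
                = Complex.I * Complex.I * (Complex.I * (σ a b : ℂ)) by ring,
              Complex.I_mul_I]
            ring
        · simp [mixedHerm, orientHerm, hτ, ht, hg]
end

section
/- Let S_1, …, S_m be finite sets and let {f_{s_1,…,s_m}} be an interlacing family of real-rooted polynomials of the same degree with positive leading coefficients. Then there exists an assignment (s_1,…,s_m) ∈ S_1 × ⋯ × S_m such that the largest root of f_{s_1,…,s_m} is at most the largest root of f_∅ := Σ_{(t_1,…,t_m) ∈ S_1 × ⋯ × S_m} f_{t_1,…,t_m}. -/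
open Polynomial

/-- `g = c·Π_{j=1}^{n}(X − α_j)` interlaces `f = d·Π_{j=1}^{n+1}(X − β_j)` if
`β_1 ≤ α_1 ≤ β_2 ≤ α_2 ≤ … ≤ α_n ≤ β_{n+1}`. -/
def Interlaces (g f : Polynomial ℝ) : Prop :=
  ∃ (n : ℕ) (c d : ℝ) (α : Fin n → ℝ) (β : Fin (n + 1) → ℝ),
    c ≠ 0 ∧ d ≠ 0 ∧
    g = C c * ∏ j, (X - C (α j)) ∧
    f = C d * ∏ j, (X - C (β j)) ∧
    ∀ j : Fin n, β j.castSucc ≤ α j ∧ α j ≤ β j.succ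

/-- A real polynomial has only real roots (as a polynomial over `ℂ`). -/
def RealRooted (p : Polynomial ℝ) : Prop :=
  ∀ z : ℂ, Polynomial.aeval z p = 0 → z.im = 0

private lemma sum_lead {ι : Type*} (k : Finset ι) (hk : k.Nonempty) (F : ι → Polynomial ℝ)
    (D : ℕ) (hdeg : ∀ i ∈ k, (F i).natDegree = D) (hpos : ∀ i ∈ k, 0 < (F i).leadingCoeff) :
    (∑ i ∈ k, F i).natDegree = D ∧ 0 < (∑ i ∈ k, F i).leadingCoeff := by
  have hpos' : 0 < (∑ i ∈ k, F i).coeff D := by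
    rw [Polynomial.finset_sum_coeff]
    apply Finset.sum_pos _ hk
    intro i hi
    have h1 : (F i).coeff D = (F i).leadingCoeff := by rw [← hdeg i hi]; rfl
    rw [h1]; exact hpos i hi
  have hle : (∑ i ∈ k, F i).natDegree ≤ D :=
    Polynomial.natDegree_sum_le_of_forall_le _ _ (fun i hi => le_of_eq (hdeg i hi))
  have hge : D ≤ (∑ i ∈ k, F i).natDegree :=
    Polynomial.le_natDegree_of_ne_zero hpos'.ne'
  have hD : (∑ i ∈ k, F i).natDegree = D := le_antisymm hle hge
  refine ⟨hD, ?_⟩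
  rwa [Polynomial.leadingCoeff, hD]

private lemma perI {g f : Polynomial ℝ} (hint : Interlaces g f) (hf : 0 < f.leadingCoeff) :
    f.natDegree = g.natDegree + 1 ∧
    (∀ A : ℝ, (∀ y, g.IsRoot y → y ≤ A) → g.IsRoot A →
      ∃ B, f.eval A ≤ 0 ∧ (∀ x, f.IsRoot x → x ≤ A ∨ x ≤ B) ∧
        (∀ x, A < x → x < B → f.eval x < 0)) ∧
    (g.natDegree = 0 →
      ∃ B, f.IsRoot B ∧ (∀ x, f.IsRoot x → x = B) ∧ (∀ x, x < B → f.eval x < 0)) ∧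
    (0 < g.natDegree → ∃ y, g.IsRoot y) := by
  obtain ⟨n, c, d, α, β, hc, hd, hg, hfe, hch⟩ := hint
  have hmβ : (∏ j : Fin (n + 1), (X - C (β j))).Monic :=
    monic_prod_of_monic _ _ fun j _ => monic_X_sub_C _
  have hdegβ : (∏ j : Fin (n + 1), (X - C (β j))).natDegree = n + 1 := by
    rw [Polynomial.natDegree_prod]
    · simp [Polynomial.natDegree_X_sub_C]
    · intro j _; exact Polynomial.X_sub_C_ne_zero _
  have hdegα : (∏ j : Fin n, (X - C (α j))).natDegree = n := by
    rw [Polynomial.natDegree_prod]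
    · simp [Polynomial.natDegree_X_sub_C]
    · intro j _; exact Polynomial.X_sub_C_ne_zero _
  have hdf : f.natDegree = n + 1 := by rw [hfe, Polynomial.natDegree_C_mul hd, hdegβ]
  have hdg : g.natDegree = n := by rw [hg, Polynomial.natDegree_C_mul hc, hdegα]
  have hlf : f.leadingCoeff = d := by
    rw [hfe, Polynomial.leadingCoeff_mul, hmβ.leadingCoeff, Polynomial.leadingCoeff_C, mul_one]
  have hd0 : 0 < d := by rw [hlf] at hf; exact hf
  have evalf : ∀ x, f.eval x = d * ∏ j, (x - β j) := by
    intro x; rw [hfe]; simp [Polynomial.eval_prod]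
  have evalg : ∀ x, g.eval x = c * ∏ j, (x - α j) := by
    intro x; rw [hg]; simp [Polynomial.eval_prod]
  have rootf : ∀ x, f.IsRoot x ↔ ∃ j, x = β j := by
    intro x
    rw [Polynomial.IsRoot, evalf, mul_eq_zero]
    constructor
    · rintro (h | h)
      · exact absurd h hd0.ne'
      · rcases Finset.prod_eq_zero_iff.mp h with ⟨j, _, hj⟩
        exact ⟨j, sub_eq_zero.mp hj⟩
    · rintro ⟨j, rfl⟩
      exact Or.inr (Finset.prod_eq_zero (Finset.mem_univ j) (by ring))
  have rootg : ∀ y, g.IsRoot y ↔ ∃ j, y = α j := by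
    intro y
    rw [Polynomial.IsRoot, evalg, mul_eq_zero]
    constructor
    · rintro (h | h)
      · exact absurd h hc
      · rcases Finset.prod_eq_zero_iff.mp h with ⟨j, _, hj⟩
        exact ⟨j, sub_eq_zero.mp hj⟩
    · rintro ⟨j, rfl⟩
      exact Or.inr (Finset.prod_eq_zero (Finset.mem_univ j) (by ring))
  refine ⟨by rw [hdf, hdg], ?_, ?_, ?_⟩
  · intro A hA1 hA2
    have hαA : ∀ j, α j ≤ A := fun j => hA1 _ ((rootg _).mpr ⟨j, rfl⟩)
    obtain ⟨j0, hj0⟩ := (rootg A).mp hA2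
    refine ⟨β (Fin.last n), ?_, ?_, ?_⟩
    · by_cases hz : ∃ j : Fin n, A = β j.castSucc
      · obtain ⟨j, hj⟩ := hz
        have hz0 : (∏ j' : Fin (n + 1), (A - β j')) = 0 :=
          Finset.prod_eq_zero (Finset.mem_univ j.castSucc) (by rw [hj]; ring)
        rw [evalf, hz0, mul_zero]
      · push_neg at hz
        have h1 : A ≤ β j0.succ := by rw [hj0]; exact (hch j0).2
        have hAle : A ≤ β (Fin.last n) := by
          rcases eq_or_ne j0.succ (Fin.last n) with he | he
          · rw [← he]; exact h1
          · obtain ⟨j', hj'⟩ := Fin.exists_castSucc_eq.mpr he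
            exact absurd (le_antisymm (hj' ▸ h1) ((hch j').1.trans (hαA j'))) (hz j')
        rw [evalf, Fin.prod_univ_castSucc]
        have hpr : 0 ≤ ∏ j : Fin n, (A - β j.castSucc) :=
          Finset.prod_nonneg fun j _ => sub_nonneg.mpr ((hch j).1.trans (hαA j))
        have h2 : A - β (Fin.last n) ≤ 0 := sub_nonpos.mpr hAle
        nlinarith [mul_nonneg hd0.le hpr]
    · intro x hx
      obtain ⟨j, rfl⟩ := (rootf x).mp hx
      rcases eq_or_ne j (Fin.last n) with rfl | hne
      · exact Or.inr le_rfl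
      · obtain ⟨j', rfl⟩ := Fin.exists_castSucc_eq.mpr hne
        exact Or.inl ((hch j').1.trans (hαA j'))
    · intro x hAx hxB
      rw [evalf, Fin.prod_univ_castSucc]
      have hpr : 0 < ∏ j : Fin n, (x - β j.castSucc) :=
        Finset.prod_pos fun j _ => sub_pos.mpr (lt_of_le_of_lt ((hch j).1.trans (hαA j)) hAx)
      have hneg : x - β (Fin.last n) < 0 := sub_neg.mpr hxB
      exact mul_neg_of_pos_of_neg hd0 (mul_neg_of_pos_of_neg hpr hneg)
  · intro hg0
    have hn : n = 0 := by rw [hdg] at hg0; exact hg0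
    subst hn
    refine ⟨β (Fin.last 0), (rootf _).mpr ⟨Fin.last 0, rfl⟩, ?_, ?_⟩
    · intro x hx
      obtain ⟨j, rfl⟩ := (rootf x).mp hx
      have hj : j = Fin.last 0 := Fin.ext (by omega)
      rw [hj]
    · intro x hxB
      rw [evalf]
      have h1 : (∏ j : Fin 1, (x - β j)) = x - β (Fin.last 0) := by
        rw [Fin.prod_univ_one]; rfl
      rw [h1]
      exact mul_neg_of_pos_of_neg hd0 (sub_neg.mpr hxB)
  · intro hgpos
    have hn : 0 < n := by rw [hdg] at hgpos; exact hgpos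
    exact ⟨α ⟨0, hn⟩, (rootg _).mpr ⟨⟨0, hn⟩, rfl⟩⟩

private lemma key' {ι : Type*} (k : Finset ι) (hk : k.Nonempty) (F : ι → Polynomial ℝ)
    (A : ℝ) (b : ι → ℝ)
    (hdeg : 0 < (∑ j ∈ k, F j).natDegree) (hlead : 0 < (∑ j ∈ k, F j).leadingCoeff)
    (hQ1 : ∀ i ∈ k, (F i).eval A ≤ 0)
    (hQ2 : ∀ i ∈ k, ∀ x, (F i).IsRoot x → x ≤ A ∨ x ≤ b i)
    (hQ3 : ∀ i ∈ k, ∀ x, A < x → x < b i → (F i).eval x < 0) :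
    ∃ i ∈ k, ∀ x, (F i).IsRoot x → ∃ y, (∑ j ∈ k, F j).IsRoot y ∧ x ≤ y := by
  set P := ∑ j ∈ k, F j with hP
  have hP0 : P ≠ 0 := by
    intro h; rw [h] at hlead; simp at hlead
  have hfin : {x : ℝ | P.IsRoot x}.Finite := Polynomial.finite_setOf_isRoot hP0
  have hcont : ∀ x, P.eval x = ∑ j ∈ k, (F j).eval x := fun x => Polynomial.eval_finset_sum k F x
  have htop : Filter.Tendsto (fun x => P.eval x) Filter.atTop Filter.atTop :=
    P.tendsto_atTop_of_leadingCoeff_nonneg (Polynomial.natDegree_pos_iff_degree_pos.mp hdeg)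
      hlead.le
  have hA : P.eval A ≤ 0 := by rw [hcont]; exact Finset.sum_nonpos hQ1
  have hbig : ∀ a : ℝ, ∃ X0, 0 < P.eval X0 ∧ a ≤ X0 := by
    intro a
    obtain ⟨X0, h1, h2⟩ := ((htop.eventually_gt_atTop 0).and (Filter.eventually_ge_atTop a)).exists
    exact ⟨X0, h1, h2⟩
  obtain ⟨r, hrA, hrroot⟩ : ∃ r, A ≤ r ∧ P.IsRoot r := by
    obtain ⟨X0, hX0pos, hX0ge⟩ := hbig A
    have hiv := intermediate_value_Icc hX0ge (P.continuous_aeval.continuousOn)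
    have h0m : (0 : ℝ) ∈ Set.Icc (P.eval A) (P.eval X0) := ⟨hA, hX0pos.le⟩
    obtain ⟨r, hr, hr0⟩ := hiv h0m
    exact ⟨r, hr.1, hr0⟩
  have hne : {x : ℝ | P.IsRoot x}.Nonempty := ⟨r, hrroot⟩
  set M := sSup {x : ℝ | P.IsRoot x} with hM
  have hMroot : P.IsRoot M := hne.csSup_mem hfin
  have hAM : A ≤ M := hrA.trans (le_csSup hfin.bddAbove hrroot)
  have hMpos : ∀ x, M < x → 0 < P.eval x := by
    intro x hx
    rcases lt_trichotomy (P.eval x) 0 with hneg | h0 | hposx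
    · exfalso
      obtain ⟨X1, hX1pos, hX1ge⟩ := hbig x
      have hiv := intermediate_value_Icc hX1ge (P.continuous_aeval.continuousOn)
      have h0m : (0 : ℝ) ∈ Set.Icc (P.eval x) (P.eval X1) := ⟨hneg.le, hX1pos.le⟩
      obtain ⟨y, hy, hy0⟩ := hiv h0m
      have : y ≤ M := le_csSup hfin.bddAbove hy0
      have := hy.1
      linarith
    · exfalso
      have : x ≤ M := le_csSup hfin.bddAbove h0
      linarith
    · exact hposx
  suffices h : ∃ i ∈ k, ∀ x, (F i).IsRoot x → x ≤ M by
    obtain ⟨i, hik, hi⟩ := h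
    exact ⟨i, hik, fun x hx => ⟨M, hMroot, hi x hx⟩⟩
  by_contra hcon
  push_neg at hcon
  have hb : ∀ i ∈ k, M < b i := by
    intro i hi
    obtain ⟨x, hx, hMx⟩ := hcon i hi
    rcases hQ2 i hi x hx with h | h
    · linarith
    · linarith
  obtain ⟨i0, hi0, hmin⟩ := k.exists_min_image b hk
  set x := (M + b i0) / 2 with hxdef
  have hx1 : M < x := by have := hb i0 hi0; rw [hxdef]; linarith
  have hx2 : ∀ i ∈ k, x < b i := by
    intro i hi
    have h1 : x < b i0 := by have := hb i0 hi0; rw [hxdef]; linarith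
    exact lt_of_lt_of_le h1 (hmin i hi)
  have hneg : P.eval x < 0 := by
    rw [hcont]
    have := Finset.sum_lt_sum_of_nonempty hk
      (g := fun _ => (0 : ℝ)) (fun i hi => hQ3 i hi x (lt_of_le_of_lt hAM hx1) (hx2 i hi))
    simpa using this
  linarith [hMpos x hx1]

private lemma key {ι : Type*} (k : Finset ι) (hk : k.Nonempty) (F : ι → Polynomial ℝ)
    (g : Polynomial ℝ) (hpos : ∀ i ∈ k, 0 < (F i).leadingCoeff)
    (hint : ∀ i ∈ k, Interlaces g (F i)) :
    ∃ i ∈ k, ∀ x, (F i).IsRoot x → ∃ y, (∑ j ∈ k, F j).IsRoot y ∧ x ≤ y := by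
  classical
  have hfacts := fun i (hi : i ∈ k) => perI (hint i hi) (hpos i hi)
  have hdegs : ∀ i ∈ k, (F i).natDegree = g.natDegree + 1 := fun i hi => (hfacts i hi).1
  obtain ⟨hdS, hlS⟩ := sum_lead k hk F (g.natDegree + 1) hdegs hpos
  have hdpos : 0 < (∑ j ∈ k, F j).natDegree := by rw [hdS]; omega
  rcases Nat.eq_zero_or_pos g.natDegree with hN | hN
  · have h0 := fun i (hi : i ∈ k) => (hfacts i hi).2.2.1 hN
    choose! B hB1 hB2 hB3 using h0
    set A := (k.image B).min' (hk.image B) with hA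
    refine key' k hk F A B hdpos hlS ?_ ?_ ?_
    · intro i hi
      have hAB : A ≤ B i := Finset.min'_le _ _ (Finset.mem_image_of_mem B hi)
      rcases eq_or_lt_of_le hAB with he | hl
      · rw [he]; exact le_of_eq (hB1 i hi)
      · exact (hB3 i hi A hl).le
    · intro i hi x hx
      exact Or.inr (le_of_eq (hB2 i hi x hx))
    · intro i hi x _ hxB
      exact hB3 i hi x hxB
  · obtain ⟨i1, hi1⟩ := id hk
    have hgr : ∃ y, g.IsRoot y := (hfacts i1 hi1).2.2.2 hN
    have hgne : g ≠ 0 := by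
      intro h; rw [h] at hN; simp at hN
    have hfing : {y : ℝ | g.IsRoot y}.Finite := Polynomial.finite_setOf_isRoot hgne
    set A := sSup {y : ℝ | g.IsRoot y} with hA
    have hgr' : {y : ℝ | g.IsRoot y}.Nonempty := hgr
    have hA2 : g.IsRoot A := hgr'.csSup_mem hfing
    have hA1 : ∀ y, g.IsRoot y → y ≤ A := fun y hy => le_csSup hfing.bddAbove hy
    have h1 := fun i (hi : i ∈ k) => (hfacts i hi).2.1 A hA1 hA2
    choose! B hB1 hB2 hB3 using h1
    exact key' k hk F A B hdpos hlS hB1 hB2 hB3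

open Classical in
/-- if `{f_s : s ∈ S_1 × ⋯ × S_m}` is an interlacing family of real-rooted
polynomials of the same degree with positive leading coefficients, then some assignment
`t` has the largest root of `f_t` at most the largest root of `f_∅ = Σ_t f_t`. -/
theorem interlacing_family_exists_assignment {α : Type*} [DecidableEq α]
    (m n : ℕ) (S : Fin m → Finset α) (hS : ∀ i, (S i).Nonempty)
    (f : (Fin m → α) → Polynomial ℝ)
    (hdeg : ∀ t ∈ Fintype.piFinset S, (f t).natDegree = n)
    (hlead : ∀ t ∈ Fintype.piFinset S, 0 < (f t).leadingCoeff)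
    (hrr : ∀ t ∈ Fintype.piFinset S, RealRooted (f t))
    (hIF : ∀ (k : ℕ) (hk : k < m) (s : Fin k → α),
      (∀ i : Fin k, s i ∈ S (Fin.castLE hk.le i)) →
      ∃ g : Polynomial ℝ, ∀ u ∈ S ⟨k, hk⟩,
        Interlaces g (∑ t ∈ (Fintype.piFinset S).filter
          (fun t => ∀ i : Fin (k + 1), t (Fin.castLE hk i) = (Fin.snoc s u : Fin (k + 1) → α) i), f t)) :
    ∃ t ∈ Fintype.piFinset S, ∀ x : ℝ, (f t).IsRoot x →
      x ≤ sSup {y : ℝ | (∑ t' ∈ Fintype.piFinset S, f t').IsRoot y} := by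
  classical
  have hpne : (Fintype.piFinset S).Nonempty := Fintype.piFinset_nonempty.mpr hS
  obtain ⟨hDtot, hLtot⟩ := sum_lead _ hpne f n hdeg hlead
  have htot0 : (∑ t ∈ Fintype.piFinset S, f t) ≠ 0 := by
    intro h; rw [h] at hLtot; simp at hLtot
  have hfintot := Polynomial.finite_setOf_isRoot htot0
  have main : ∀ k (hk : k ≤ m), ∃ s : Fin k → α,
      (∀ i : Fin k, s i ∈ S (Fin.castLE hk i)) ∧
      ∀ x : ℝ, (∑ t ∈ (Fintype.piFinset S).filter
          (fun t => ∀ i : Fin k, t (Fin.castLE hk i) = s i), f t).IsRoot x →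
        ∃ y, (∑ t' ∈ Fintype.piFinset S, f t').IsRoot y ∧ x ≤ y := by
    intro k
    induction k with
    | zero =>
      intro hk
      refine ⟨Fin.elim0, fun i => i.elim0, ?_⟩
      have hfeq : (Fintype.piFinset S).filter
          (fun t => ∀ i : Fin 0, t (Fin.castLE hk i) = Fin.elim0 i) = Fintype.piFinset S :=
        Finset.filter_true_of_mem (fun t _ => fun i => i.elim0)
      rw [hfeq]
      intro x hx
      exact ⟨x, hx, le_rfl⟩
    | succ k ih =>
      intro hk1
      have hk : k < m := hk1
      obtain ⟨s, hsmem, hs⟩ := ih hk.le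
      obtain ⟨g, hg⟩ := hIF k hk s hsmem
      set F : α → Polynomial ℝ := fun u => ∑ t ∈ (Fintype.piFinset S).filter
          (fun t => ∀ i : Fin (k + 1),
            t (Fin.castLE hk i) = (Fin.snoc s u : Fin (k + 1) → α) i), f t with hF
      have hsnocmem : ∀ u ∈ S ⟨k, hk⟩, ∀ i : Fin (k + 1),
          (Fin.snoc s u : Fin (k + 1) → α) i ∈ S (Fin.castLE hk i) := by
        intro u hu i
        refine Fin.lastCases ?_ ?_ i
        · rw [Fin.snoc_last]; exact hu
        · intro j; rw [Fin.snoc_castSucc]; exact hsmem j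
      have hTne : ∀ u ∈ S ⟨k, hk⟩, ((Fintype.piFinset S).filter
          (fun t => ∀ i : Fin (k + 1),
            t (Fin.castLE hk i) = (Fin.snoc s u : Fin (k + 1) → α) i)).Nonempty := by
        intro u hu
        refine ⟨fun j => if h : (j : ℕ) < k + 1
          then (Fin.snoc s u : Fin (k + 1) → α) ⟨j, h⟩ else (hS j).choose, ?_⟩
        rw [Finset.mem_filter]
        constructor
        · rw [Fintype.mem_piFinset]
          intro j
          by_cases h : (j : ℕ) < k + 1
          · rw [dif_pos h]
            exact hsnocmem u hu ⟨j, h⟩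
          · rw [dif_neg h]
            exact (hS j).choose_spec
        · intro i
          have hlt : ((Fin.castLE hk i : Fin m) : ℕ) < k + 1 := i.isLt
          beta_reduce
          rw [dif_pos hlt]
          exact congrArg _ (Fin.ext rfl)
      have hpos : ∀ u ∈ S ⟨k, hk⟩, 0 < (F u).leadingCoeff := by
        intro u hu
        exact (sum_lead _ (hTne u hu) f n
          (fun t ht => hdeg t (Finset.mem_of_mem_filter t ht))
          (fun t ht => hlead t (Finset.mem_of_mem_filter t ht))).2
      have hdecomp : (∑ u ∈ S ⟨k, hk⟩, F u) = ∑ t ∈ (Fintype.piFinset S).filter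
          (fun t => ∀ i : Fin k, t (Fin.castLE hk.le i) = s i), f t := by
        rw [← Finset.sum_fiberwise_of_maps_to (g := fun t => t ⟨k, hk⟩)
          (t := S ⟨k, hk⟩) (fun t ht => by
            have := Fintype.mem_piFinset.mp (Finset.mem_of_mem_filter t ht)
            exact this ⟨k, hk⟩) f]
        apply Finset.sum_congr rfl
        intro u hu
        have hset : Finset.filter (fun t => t ⟨k, hk⟩ = u)
            ((Fintype.piFinset S).filter (fun t => ∀ i : Fin k, t (Fin.castLE hk.le i) = s i))
            = (Fintype.piFinset S).filter (fun t => ∀ i : Fin (k + 1),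
              t (Fin.castLE hk i) = (Fin.snoc s u : Fin (k + 1) → α) i) := by
          ext t
          simp only [Finset.mem_filter, Fintype.mem_piFinset]
          constructor
          · rintro ⟨⟨hp, hck⟩, hu'⟩
            refine ⟨hp, fun i => ?_⟩
            refine Fin.lastCases ?_ ?_ i
            · rw [Fin.snoc_last]; exact hu'
            · intro j; rw [Fin.snoc_castSucc]; exact hck j
          · rintro ⟨hp, hcond⟩
            refine ⟨⟨hp, fun j => ?_⟩, ?_⟩
            · have := hcond j.castSucc; rwa [Fin.snoc_castSucc] at this
            · have := hcond (Fin.last k); rwa [Fin.snoc_last] at this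
        rw [hset]
      obtain ⟨u, hu, hukey⟩ := key (S ⟨k, hk⟩) (hS _) F g hpos (fun u hu => hg u hu)
      refine ⟨Fin.snoc s u, hsnocmem u hu, ?_⟩
      intro x hx
      obtain ⟨y, hy, hxy⟩ := hukey x hx
      rw [hdecomp] at hy
      obtain ⟨z, hz, hyz⟩ := hs y hy
      exact ⟨z, hz, hxy.trans hyz⟩
  obtain ⟨s, hsmem, hs⟩ := main m le_rfl
  have hsS : s ∈ Fintype.piFinset S := Fintype.mem_piFinset.mpr (fun i => hsmem i)
  refine ⟨s, hsS, ?_⟩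
  intro x hx
  have hfilter : (Fintype.piFinset S).filter
      (fun t => ∀ i : Fin m, t (Fin.castLE le_rfl i) = s i) = {s} := by
    ext t
    simp only [Finset.mem_filter, Finset.mem_singleton]
    constructor
    · rintro ⟨_, h⟩
      funext i
      exact h i
    · rintro rfl
      exact ⟨hsS, fun i => rfl⟩
  have hs' := hs x (by rw [hfilter, Finset.sum_singleton]; exact hx)
  obtain ⟨y, hy, hxy⟩ := hs'
  exact hxy.trans (le_csSup hfintot.bddAbove hy)
end

section
/- Let a_1, …, a_m, b_1, …, b_m be vectors in ℂ^n, let D be a Hermitian positive semidefinite n×n matrix, and let p_1, …, p_m be real numbers in [0,1]. Then the polynomial Σ_{S ⊆ [m]} (Π_{j∈S} p_j)(Π_{j∉S} (1−p_j)) · det(xI + D + Σ_{j∈S} a_j a_j^* + Σ_{j∉S} b_j b_j^*) has only real roots. -/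
open Polynomial
open scoped ComplexOrder

open Matrix

namespace MSS



lemma affine_sum {ι : Type*} (t : Finset ι) (g : ι → ℂ → ℂ)
    (h : ∀ i ∈ t, ∃ A B : ℂ, ∀ s, g i s = A + B * s) :
    ∃ A B : ℂ, ∀ s, (∑ i ∈ t, g i s) = A + B * s := by
  classical
  induction t using Finset.induction_on with
  | empty => exact ⟨0, 0, by simp⟩
  | @insert k t' hk ih =>
    obtain ⟨A, B, hAB⟩ := h k (Finset.mem_insert_self _ _)
    obtain ⟨A', B', hAB'⟩ := ih fun i hi => h i (Finset.mem_insert_of_mem hi)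
    exact ⟨A + A', B + B', fun s => by rw [Finset.sum_insert hk, hAB, hAB']; ring⟩

lemma det_affine {n : ℕ} (M : Matrix (Fin n) (Fin n) ℂ) (u v : Fin n → ℂ) :
    ∃ A B : ℂ, ∀ s : ℂ, (M + s • vecMulVec u v).det = A + B * s := by
  classical
  set f := (detRowAlternating : (Fin n → ℂ) [⋀^Fin n]→ₗ[ℂ] ℂ)
  have hdet : ∀ s : ℂ, (M + s • vecMulVec u v).det =
      ∑ S : Finset (Fin n), f (S.piecewise (fun i => (s * u i) • v) (fun i => M i)) := by
    intro s
    have hr : (M + s • vecMulVec u v) =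
        ((fun i => (s * u i) • v) + (fun i => M i) : Fin n → Fin n → ℂ) := by
      funext i j
      simp [Matrix.add_apply, Matrix.smul_apply, Matrix.vecMulVec_apply, Pi.add_apply,
        Pi.smul_apply, smul_eq_mul]
      ring
    have : (M + s • vecMulVec u v).det =
        f.toMultilinearMap ((fun i => (s * u i) • v) + (fun i => M i)) := by
      rw [show (M + s • vecMulVec u v).det = f (M + s • vecMulVec u v) from rfl, hr]; rfl
    rw [this, f.toMultilinearMap.map_add_univ]
    rfl
  have hterm : ∀ S : Finset (Fin n), ∃ A B : ℂ, ∀ s : ℂ,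
      f (S.piecewise (fun i => (s * u i) • v) (fun i => M i)) = A + B * s := by
    intro S
    by_cases h2 : 2 ≤ S.card
    · obtain ⟨i, hi, k, hk, hik⟩ := Finset.one_lt_card.mp h2
      refine ⟨0, 0, fun s => ?_⟩
      set X := S.piecewise (fun i => (s * u i) • v) (fun i => M i) with hX
      have hXi : X i = (s * u i) • v := S.piecewise_eq_of_mem _ _ hi
      have hXk : X k = (s * u k) • v := S.piecewise_eq_of_mem _ _ hk
      have e1 : f X = (s * u i) • f (Function.update X i v) := by
        conv_lhs => rw [← Function.update_eq_self i X, hXi]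
        exact f.map_update_smul X i (s * u i) v
      have e2 : f (Function.update X i v) =
          (s * u k) • f (Function.update (Function.update X i v) k v) := by
        conv_lhs => rw [← Function.update_eq_self k (Function.update X i v),
          Function.update_of_ne hik.symm, hXk]
        exact f.map_update_smul _ k (s * u k) v
      have e3 : f (Function.update (Function.update X i v) k v) = 0 := by
        refine f.map_eq_zero_of_eq _ ?_ hik
        rw [Function.update_of_ne hik, Function.update_self, Function.update_self]
      rw [e1, e2, e3]; simp
    · have h01 : S.card = 0 ∨ S.card = 1 := by omega
      rcases h01 with h0 | h1
      · refine ⟨f (fun i => M i), 0, fun s => ?_⟩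
        rw [Finset.card_eq_zero.mp h0]
        simp [Finset.piecewise_empty]
      · obtain ⟨i, rfl⟩ := Finset.card_eq_one.mp h1
        refine ⟨0, u i * f (Function.update (fun i => M i) i v), fun s => ?_⟩
        rw [Finset.piecewise_singleton]
        have : f (Function.update (fun i => M i) i ((s * u i) • v)) =
            (s * u i) • f (Function.update (fun i => M i) i v) :=
          f.map_update_smul _ i (s * u i) v
        rw [this]; simp; ring
  obtain ⟨A, B, hAB⟩ := affine_sum Finset.univ
    (fun S s => f (S.piecewise (fun i => (s * u i) • v) (fun i => M i)))
    (fun S _ => hterm S)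
  exact ⟨A, B, fun s => by rw [hdet s]; exact hAB s⟩



lemma ofReal_mul_im (r : ℝ) (z : ℂ) : ((r : ℂ) * z).im = r * z.im := by
  simp [Complex.mul_im]

lemma slope_im {A B s : ℂ} (h : ∀ s' : ℂ, 0 < s'.im → A + B * s' ≠ 0)
    (hs : 0 < s.im) :
    (B * (A + B * s)⁻¹).im ≤ 0 ∧ ((B * (A + B * s)⁻¹).im = 0 → B = 0) := by
  by_cases hB : B = 0
  · simp [hB]
  · set r : ℂ := -(A / B) with hr
    have hrim : r.im ≤ 0 := by
      by_contra hc
      push_neg at hc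
      refine h r hc ?_
      rw [hr]; field_simp; ring
    have hA : A = -B * r := by rw [hr]; field_simp
    have hsr : s - r ≠ 0 := by
      intro hc
      have h1 : (s - r).im = 0 := by rw [hc]; simp
      rw [Complex.sub_im] at h1
      linarith
    have key : B * (A + B * s)⁻¹ = (s - r)⁻¹ := by
      rw [hA]
      have e : -B * r + B * s = B * (s - r) := by ring
      rw [e, mul_inv]
      field_simp
    rw [key]
    have him : ((s - r)⁻¹).im < 0 := by
      rw [Complex.inv_im]
      have h1 : 0 < (s - r).im := by rw [Complex.sub_im]; linarith
      have h2 : 0 < Complex.normSq (s - r) := Complex.normSq_pos.mpr hsr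
      exact div_neg_of_neg_of_pos (by linarith) h2
    exact ⟨le_of_lt him, fun hc => absurd hc (ne_of_lt him)⟩

lemma one_add_comb_ne_zero {p : ℝ} (hp0 : 0 ≤ p) (hp1 : p ≤ 1) {u v : ℂ}
    (hu : u.im ≤ 0 ∧ (u.im = 0 → u = 0)) (hv : v.im ≤ 0 ∧ (v.im = 0 → v = 0)) :
    1 + (p : ℂ) * u + (1 - (p : ℂ)) * v ≠ 0 := by
  have e : (1 - (p : ℂ)) = (((1 - p : ℝ)) : ℂ) := by push_cast; ring
  rw [e]
  have him : ((p : ℂ) * u).im ≤ 0 := by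
    rw [ofReal_mul_im]; exact mul_nonpos_of_nonneg_of_nonpos hp0 hu.1
  have him' : ((((1 - p : ℝ)) : ℂ) * v).im ≤ 0 := by
    rw [ofReal_mul_im]; exact mul_nonpos_of_nonneg_of_nonpos (by linarith) hv.1
  intro hc
  have hc_im := congrArg Complex.im hc
  simp only [Complex.add_im, Complex.one_im, Complex.zero_im] at hc_im
  have h1 : ((p : ℂ) * u).im = 0 := by linarith
  have h2 : ((((1 - p : ℝ)) : ℂ) * v).im = 0 := by linarith
  have hu0 : (p : ℂ) * u = 0 := by
    rw [ofReal_mul_im] at h1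
    rcases mul_eq_zero.mp h1 with h | h
    · simp [h]
    · simp [hu.2 h]
  have hv0 : (((1 - p : ℝ)) : ℂ) * v = 0 := by
    rw [ofReal_mul_im] at h2
    rcases mul_eq_zero.mp h2 with h | h
    · simp [h]
    · simp [hv.2 h]
  rw [hu0, hv0] at hc
  simp at hc

lemma sum_mulVec {n : ℕ} {ι : Type*} (s : Finset ι) (f : ι → Matrix (Fin n) (Fin n) ℂ)
    (v : Fin n → ℂ) : (∑ i ∈ s, f i) *ᵥ v = ∑ i ∈ s, f i *ᵥ v := by
  classical
  induction s using Finset.induction_on with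
  | empty => simp [Matrix.zero_mulVec]
  | @insert k t hk ih => rw [Finset.sum_insert hk, Finset.sum_insert hk, Matrix.add_mulVec, ih]

lemma dot_sum {n : ℕ} {ι : Type*} (s : Finset ι) (u : Fin n → ℂ) (f : ι → (Fin n → ℂ)) :
    u ⬝ᵥ (∑ i ∈ s, f i) = ∑ i ∈ s, u ⬝ᵥ f i := by
  classical
  induction s using Finset.induction_on with
  | empty => simp
  | @insert k t hk ih => rw [Finset.sum_insert hk, Finset.sum_insert hk, dotProduct_add, ih]

lemma vecMulVec_mulVec {n : ℕ} (u w v : Fin n → ℂ) :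
    (vecMulVec u w) *ᵥ v = (w ⬝ᵥ v) • u := by
  funext i
  simp [Matrix.mulVec, Matrix.vecMulVec_apply, dotProduct, Finset.sum_mul, Finset.mul_sum]
  exact Finset.sum_congr rfl fun k _ => by ring

lemma star_dot_comm {n : ℕ} (u v : Fin n → ℂ) :
    star v ⬝ᵥ u = (starRingEnd ℂ) (star u ⬝ᵥ v) := by
  simp [dotProduct, map_sum]
  exact Finset.sum_congr rfl fun k _ => by simp [mul_comm]

lemma base_ne_zero {n m : ℕ} (a b : Fin m → Fin n → ℂ) (D : Matrix (Fin n) (Fin n) ℂ)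
    (hD : D.PosSemidef) (x : ℂ) (hx : 0 < x.im) (z w : Fin m → ℂ)
    (hz : ∀ j, 0 < (z j).im) (hw : ∀ j, 0 < (w j).im) :
    (x • (1 : Matrix (Fin n) (Fin n) ℂ) + D + (∑ j, z j • vecMulVec (a j) (star (a j)))
      + ∑ j, w j • vecMulVec (b j) (star (b j))).det ≠ 0 := by
  classical
  intro hdet
  obtain ⟨v, hv0, hMv⟩ := (Matrix.exists_mulVec_eq_zero_iff).mpr hdet
  have h0 : star v ⬝ᵥ ((x • (1 : Matrix (Fin n) (Fin n) ℂ) + D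
      + (∑ j, z j • vecMulVec (a j) (star (a j)))
      + ∑ j, w j • vecMulVec (b j) (star (b j))) *ᵥ v) = 0 := by
    rw [hMv]; simp
  rw [Matrix.add_mulVec, Matrix.add_mulVec, Matrix.add_mulVec, sum_mulVec, sum_mulVec,
    Matrix.smul_mulVec, Matrix.one_mulVec, dotProduct_add, dotProduct_add,
    dotProduct_add, dot_sum, dot_sum] at h0
  simp only [Matrix.smul_mulVec, dotProduct_smul, smul_eq_mul] at h0
  have hA : ∀ u : Fin n → ℂ, star v ⬝ᵥ ((vecMulVec u (star u)) *ᵥ v)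
      = ((Complex.normSq (star v ⬝ᵥ u) : ℝ) : ℂ) := by
    intro u
    rw [vecMulVec_mulVec, dotProduct_smul, smul_eq_mul, star_dot_comm v u]
    rw [mul_comm, Complex.mul_conj]
  simp only [hA] at h0
  have hvv : star v ⬝ᵥ v = ((∑ i, Complex.normSq (v i) : ℝ) : ℂ) := by
    simp only [dotProduct, Complex.ofReal_sum, Pi.star_apply]
    refine Finset.sum_congr rfl fun i _ => ?_
    rw [mul_comm]
    exact Complex.mul_conj (v i)
  rw [hvv] at h0
  have hDnn := hD.dotProduct_mulVec_nonneg v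
  have hDim : (star v ⬝ᵥ D *ᵥ v).im = 0 := by
    rcases Complex.nonneg_iff.mp hDnn with ⟨_, h⟩
    exact h.symm
  have him := congrArg Complex.im h0
  simp only [Complex.add_im, Complex.im_sum, Complex.mul_im, Complex.ofReal_im,
    Complex.ofReal_re, Complex.zero_im, mul_zero, zero_mul, add_zero, zero_add, hDim] at him
  have htpos : 0 < ∑ i, Complex.normSq (v i) := by
    have hex : ∃ i, v i ≠ 0 := by
      by_contra hc; push_neg at hc; exact hv0 (funext hc)
    obtain ⟨i, hi⟩ := hex
    exact Finset.sum_pos' (fun j _ => Complex.normSq_nonneg _)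
      ⟨i, Finset.mem_univ i, Complex.normSq_pos.mpr hi⟩
  have hsz : 0 ≤ ∑ j, (z j).im * Complex.normSq (star v ⬝ᵥ a j) :=
    Finset.sum_nonneg fun j _ => mul_nonneg (le_of_lt (hz j)) (Complex.normSq_nonneg _)
  have hsw : 0 ≤ ∑ j, (w j).im * Complex.normSq (star v ⬝ᵥ b j) :=
    Finset.sum_nonneg fun j _ => mul_nonneg (le_of_lt (hw j)) (Complex.normSq_nonneg _)
  have hxt : 0 < x.im * ∑ i, Complex.normSq (v i) := mul_pos hx htpos
  linarith [him]

variable {n m : ℕ}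


/-- the multivariate determinant function -/
noncomputable def Phi (a b : Fin m → Fin n → ℂ) (D : Matrix (Fin n) (Fin n) ℂ)
    (z w : Fin m → ℂ) (x : ℂ) : ℂ :=
  (x • (1 : Matrix (Fin n) (Fin n) ℂ) + D + (∑ j, z j • vecMulVec (a j) (star (a j)))
    + ∑ j, w j • vecMulVec (b j) (star (b j))).det

/-- partially-averaged function -/
noncomputable def Fp (a b : Fin m → Fin n → ℂ) (D : Matrix (Fin n) (Fin n) ℂ)
    (p : Fin m → ℝ) (T : Finset (Fin m)) (z w : Fin m → ℂ) (x : ℂ) : ℂ :=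
  ∑ S ∈ T.powerset, ((∏ j ∈ S, (p j : ℂ)) * ∏ j ∈ T \ S, (1 - (p j : ℂ))) *
    Phi a b D (fun j => z j + if j ∈ S then 1 else 0)
      (fun j => w j + if j ∈ T \ S then 1 else 0) x

section AffineLemmas

variable (a b : Fin m → Fin n → ℂ) (D : Matrix (Fin n) (Fin n) ℂ) (p : Fin m → ℝ)

lemma Phi_affine_z (k : Fin m) (z w : Fin m → ℂ) (x : ℂ) :
    ∃ A B : ℂ, ∀ s : ℂ, Phi a b D (Function.update z k s) w x = A + B * s := by
  classical
  have hsum : ∀ s : ℂ, (∑ j, Function.update z k s j • vecMulVec (a j) (star (a j)))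
      = s • vecMulVec (a k) (star (a k))
        + ∑ j ∈ Finset.univ \ {k}, z j • vecMulVec (a j) (star (a j)) := by
    intro s
    have he : ∀ j, Function.update z k s j • vecMulVec (a j) (star (a j))
        = Function.update (fun j => z j • vecMulVec (a j) (star (a j))) k
            (s • vecMulVec (a k) (star (a k))) j := by
      intro j
      by_cases hj : j = k
      · subst hj; simp
      · simp [Function.update_of_ne hj]
    rw [Finset.sum_congr rfl fun j _ => he j]
    exact Finset.sum_update_of_mem (Finset.mem_univ k) _ _
  obtain ⟨A, B, hAB⟩ := det_affine
    (x • (1 : Matrix (Fin n) (Fin n) ℂ) + D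
      + (∑ j ∈ Finset.univ \ {k}, z j • vecMulVec (a j) (star (a j)))
      + ∑ j, w j • vecMulVec (b j) (star (b j))) (a k) (star (a k))
  refine ⟨A, B, fun s => ?_⟩
  rw [Phi, hsum s, ← hAB s]
  congr 1
  abel

lemma Phi_affine_w (k : Fin m) (z w : Fin m → ℂ) (x : ℂ) :
    ∃ A B : ℂ, ∀ s : ℂ, Phi a b D z (Function.update w k s) x = A + B * s := by
  classical
  have hsum : ∀ s : ℂ, (∑ j, Function.update w k s j • vecMulVec (b j) (star (b j)))
      = s • vecMulVec (b k) (star (b k))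
        + ∑ j ∈ Finset.univ \ {k}, w j • vecMulVec (b j) (star (b j)) := by
    intro s
    have he : ∀ j, Function.update w k s j • vecMulVec (b j) (star (b j))
        = Function.update (fun j => w j • vecMulVec (b j) (star (b j))) k
            (s • vecMulVec (b k) (star (b k))) j := by
      intro j
      by_cases hj : j = k
      · subst hj; simp
      · simp [Function.update_of_ne hj]
    rw [Finset.sum_congr rfl fun j _ => he j]
    exact Finset.sum_update_of_mem (Finset.mem_univ k) _ _
  obtain ⟨A, B, hAB⟩ := det_affine
    (x • (1 : Matrix (Fin n) (Fin n) ℂ) + D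
      + (∑ j, z j • vecMulVec (a j) (star (a j)))
      + ∑ j ∈ Finset.univ \ {k}, w j • vecMulVec (b j) (star (b j))) (b k) (star (b k))
  refine ⟨A, B, fun s => ?_⟩
  rw [Phi, hsum s, ← hAB s]
  congr 1
  abel

lemma Fp_affine_z (T : Finset (Fin m)) (k : Fin m) (z w : Fin m → ℂ) (x : ℂ) :
    ∃ A B : ℂ, ∀ s : ℂ, Fp a b D p T (Function.update z k s) w x = A + B * s := by
  classical
  simp only [Fp]
  refine affine_sum _ _ fun S _ => ?_
  have harg : ∀ s : ℂ, (fun j => Function.update z k s j + if j ∈ S then (1:ℂ) else 0)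
      = Function.update (fun j => z j + if j ∈ S then (1:ℂ) else 0) k
          (s + if k ∈ S then (1:ℂ) else 0) := by
    intro s; funext j
    by_cases hj : j = k
    · subst hj; simp
    · simp [Function.update_of_ne hj]
  obtain ⟨A, B, h⟩ := Phi_affine_z a b D k (fun j => z j + if j ∈ S then (1:ℂ) else 0)
    (fun j => w j + if j ∈ T \ S then 1 else 0) x
  refine ⟨((∏ j ∈ S, (p j : ℂ)) * ∏ j ∈ T \ S, (1 - (p j : ℂ)))
      * (A + B * (if k ∈ S then (1:ℂ) else 0)),
    ((∏ j ∈ S, (p j : ℂ)) * ∏ j ∈ T \ S, (1 - (p j : ℂ))) * B, fun s => ?_⟩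
  rw [harg s, h (s + if k ∈ S then (1:ℂ) else 0)]
  ring

lemma Fp_affine_w (T : Finset (Fin m)) (k : Fin m) (z w : Fin m → ℂ) (x : ℂ) :
    ∃ A B : ℂ, ∀ s : ℂ, Fp a b D p T z (Function.update w k s) x = A + B * s := by
  classical
  simp only [Fp]
  refine affine_sum _ _ fun S _ => ?_
  have harg : ∀ s : ℂ, (fun j => Function.update w k s j + if j ∈ T \ S then (1:ℂ) else 0)
      = Function.update (fun j => w j + if j ∈ T \ S then (1:ℂ) else 0) k
          (s + if k ∈ T \ S then (1:ℂ) else 0) := by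
    intro s; funext j
    by_cases hj : j = k
    · subst hj; simp
    · simp [Function.update_of_ne hj]
  obtain ⟨A, B, h⟩ := Phi_affine_w a b D k (fun j => z j + if j ∈ S then (1:ℂ) else 0)
    (fun j => w j + if j ∈ T \ S then (1:ℂ) else 0) x
  refine ⟨((∏ j ∈ S, (p j : ℂ)) * ∏ j ∈ T \ S, (1 - (p j : ℂ)))
      * (A + B * (if k ∈ T \ S then (1:ℂ) else 0)),
    ((∏ j ∈ S, (p j : ℂ)) * ∏ j ∈ T \ S, (1 - (p j : ℂ))) * B, fun s => ?_⟩
  rw [harg s, h (s + if k ∈ T \ S then (1:ℂ) else 0)]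
  ring

lemma Fp_recursion (T : Finset (Fin m)) (k : Fin m) (hk : k ∉ T) (z w : Fin m → ℂ) (x : ℂ) :
    Fp a b D p (insert k T) z w x
      = (p k : ℂ) * Fp a b D p T (Function.update z k (z k + 1)) w x
        + (1 - (p k : ℂ)) * Fp a b D p T z (Function.update w k (w k + 1)) x := by
  classical
  simp only [Fp]
  rw [Finset.sum_powerset_insert hk]
  rw [Finset.mul_sum, Finset.mul_sum]
  rw [add_comm]
  congr 1
  · -- sum over insert k S : gives the p k part
    refine Finset.sum_congr rfl fun S hS => ?_
    have hST : S ⊆ T := Finset.mem_powerset.mp hS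
    have hkS : k ∉ S := fun h => hk (hST h)
    have e1 : insert k T \ insert k S = T \ S := by
      ext j
      rcases eq_or_ne j k with rfl | hj
      · simp [hk]
      · simp [Finset.mem_sdiff, Finset.mem_insert, hj]
    rw [e1, Finset.prod_insert hkS]
    have e2 : (fun j => z j + if j ∈ insert k S then (1:ℂ) else 0)
        = (fun j => Function.update z k (z k + 1) j + if j ∈ S then (1:ℂ) else 0) := by
      funext j
      rcases eq_or_ne j k with rfl | hj
      · simp [hkS]
      · simp [Function.update_of_ne hj, Finset.mem_insert, hj]
    rw [e2]
    ring
  · -- sum over S ⊆ T (k ∉ S) : gives the (1 - p k) part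
    refine Finset.sum_congr rfl fun S hS => ?_
    have hST : S ⊆ T := Finset.mem_powerset.mp hS
    have hkS : k ∉ S := fun h => hk (hST h)
    have e1 : insert k T \ S = insert k (T \ S) := by
      ext j
      rcases eq_or_ne j k with rfl | hj
      · simp [hkS, hk]
      · simp [Finset.mem_sdiff, Finset.mem_insert, hj]
    have hkTS : k ∉ T \ S := fun h => hk (Finset.mem_sdiff.mp h).1
    rw [e1, Finset.prod_insert hkTS]
    have e2 : (fun j => w j + if j ∈ insert k (T \ S) then (1:ℂ) else 0)
        = (fun j => Function.update w k (w k + 1) j + if j ∈ T \ S then (1:ℂ) else 0) := by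
      funext j
      rcases eq_or_ne j k with rfl | hj
      · simp [hkTS]
      · simp [Function.update_of_ne hj, Finset.mem_insert, hj]
    rw [e2]
    ring

end AffineLemmas

lemma Fp_ne_zero (a b : Fin m → Fin n → ℂ) (D : Matrix (Fin n) (Fin n) ℂ)
    (hD : D.PosSemidef) (p : Fin m → ℝ) (hp : ∀ j, p j ∈ Set.Icc (0 : ℝ) 1)
    (T : Finset (Fin m)) :
    ∀ (z w : Fin m → ℂ) (x : ℂ), 0 < x.im → (∀ j, 0 < (z j).im) → (∀ j, 0 < (w j).im) →
      Fp a b D p T z w x ≠ 0 := by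
  classical
  induction T using Finset.induction_on with
  | empty =>
    intro z w x hx hz hw
    have : Fp a b D p ∅ z w x = Phi a b D z w x := by
      simp only [Fp]
      rw [Finset.powerset_empty, Finset.sum_singleton]
      simp [Phi]
    rw [this]
    exact base_ne_zero a b D hD x hx z w hz hw
  | @insert k T hk ih =>
    intro z w x hx hz hw
    rw [Fp_recursion a b D p T k hk z w x]
    set φ : ℂ → ℂ → ℂ := fun s t => Fp a b D p T (Function.update z k s) (Function.update w k t) x
      with hφdef
    have hφ : ∀ s t : ℂ, 0 < s.im → 0 < t.im → φ s t ≠ 0 := by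
      intro s t hs ht
      refine ih (Function.update z k s) (Function.update w k t) x hx ?_ ?_
      · intro j; rcases eq_or_ne j k with rfl | hj
        · simpa using hs
        · simpa [Function.update_of_ne hj] using hz j
      · intro j; rcases eq_or_ne j k with rfl | hj
        · simpa using ht
        · simpa [Function.update_of_ne hj] using hw j
    obtain ⟨A, B, hAB⟩ := Fp_affine_z a b D p T k z (Function.update w k (w k)) x
    obtain ⟨A', B', hA'B'⟩ := Fp_affine_w a b D p T k (Function.update z k (z k)) w x
    have hAB' : ∀ s, φ s (w k) = A + B * s := fun s => hAB s
    have hA'B'' : ∀ t, φ (z k) t = A' + B' * t := fun t => hA'B' t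
    set c : ℂ := φ (z k) (w k) with hc
    have hcz : c ≠ 0 := hφ _ _ (hz k) (hw k)
    have hc1 : c = A + B * z k := hAB' (z k)
    have hc2 : c = A' + B' * w k := hA'B'' (w k)
    -- express the two shifted values
    have hv1 : Fp a b D p T (Function.update z k (z k + 1)) w x = c + B := by
      have h1 : φ (z k + 1) (w k) = A + B * (z k + 1) := hAB' (z k + 1)
      have h2 : φ (z k + 1) (w k)
          = Fp a b D p T (Function.update z k (z k + 1)) w x := by
        show Fp a b D p T _ (Function.update w k (w k)) x = _
        rw [Function.update_eq_self]
      rw [← h2, h1, hc1]; ring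
    have hv2 : Fp a b D p T z (Function.update w k (w k + 1)) x = c + B' := by
      have h1 : φ (z k) (w k + 1) = A' + B' * (w k + 1) := hA'B'' (w k + 1)
      have h2 : φ (z k) (w k + 1)
          = Fp a b D p T z (Function.update w k (w k + 1)) x := by
        show Fp a b D p T (Function.update z k (z k)) _ x = _
        rw [Function.update_eq_self]
      rw [← h2, h1, hc2]; ring
    rw [hv1, hv2]
    -- slopes
    have hu := slope_im (A := A) (B := B) (s := z k)
      (fun s' hs' => by rw [← hAB' s']; exact hφ _ _ hs' (hw k)) (hz k)
    have hv := slope_im (A := A') (B := B') (s := w k)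
      (fun t' ht' => by rw [← hA'B'' t']; exact hφ _ _ (hz k) ht') (hw k)
    rw [← hc1] at hu
    rw [← hc2] at hv
    have hu' : (B * c⁻¹).im ≤ 0 ∧ ((B * c⁻¹).im = 0 → B * c⁻¹ = 0) :=
      ⟨hu.1, fun h => by rw [hu.2 h, zero_mul]⟩
    have hv' : (B' * c⁻¹).im ≤ 0 ∧ ((B' * c⁻¹).im = 0 → B' * c⁻¹ = 0) :=
      ⟨hv.1, fun h => by rw [hv.2 h, zero_mul]⟩
    have hcomb := one_add_comb_ne_zero (hp k).1 (hp k).2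
      (u := B * c⁻¹) (v := B' * c⁻¹) hu' hv'
    have key : (p k : ℂ) * (c + B) + (1 - (p k : ℂ)) * (c + B')
        = c * (1 + (p k : ℂ) * (B * c⁻¹) + (1 - (p k : ℂ)) * (B' * c⁻¹)) := by
      field_simp
      ring
    rw [key]
    exact mul_ne_zero hcz hcomb

noncomputable def Msum (a b : Fin m → Fin n → ℂ) (D : Matrix (Fin n) (Fin n) ℂ)
    (S : Finset (Fin m)) : Matrix (Fin n) (Fin n) ℂ :=
  D + (∑ j ∈ S, vecMulVec (a j) (star (a j))) + ∑ j ∈ Sᶜ, vecMulVec (b j) (star (b j))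

noncomputable def Esum (a b : Fin m → Fin n → ℂ) : Matrix (Fin n) (Fin n) ℂ :=
  (∑ j, vecMulVec (a j) (star (a j))) + ∑ j, vecMulVec (b j) (star (b j))

noncomputable def W (p : Fin m → ℝ) (S : Finset (Fin m)) : ℂ :=
  (∏ j ∈ S, (p j : ℂ)) * ∏ j ∈ Sᶜ, (1 - (p j : ℂ))

/-- `det (X•1 + N.map C)` is the charpoly of `-N`. -/
lemma cp_eq_charpoly (N : Matrix (Fin n) (Fin n) ℂ) :
    ((X : ℂ[X]) • (1 : Matrix (Fin n) (Fin n) ℂ[X]) + N.map C).det = (-N).charpoly := by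
  unfold Matrix.charpoly
  congr 1
  ext i j
  simp only [Matrix.add_apply, Matrix.smul_apply, Matrix.one_apply, Matrix.map_apply,
    Matrix.charmatrix_apply, Matrix.diagonal_apply, Matrix.neg_apply, map_neg]
  split_ifs <;> simp [smul_eq_mul]

lemma cp_monic (N : Matrix (Fin n) (Fin n) ℂ) :
    (((X : ℂ[X]) • (1 : Matrix (Fin n) (Fin n) ℂ[X]) + N.map C).det).Monic := by
  rw [cp_eq_charpoly]; exact Matrix.charpoly_monic _

lemma cp_natDegree (N : Matrix (Fin n) (Fin n) ℂ) :
    (((X : ℂ[X]) • (1 : Matrix (Fin n) (Fin n) ℂ[X]) + N.map C).det).natDegree = n := by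
  rw [cp_eq_charpoly, Matrix.charpoly_natDegree_eq_dim, Fintype.card_fin]

lemma cp_eval (N : Matrix (Fin n) (Fin n) ℂ) (z : ℂ) :
    eval z (((X : ℂ[X]) • (1 : Matrix (Fin n) (Fin n) ℂ[X]) + N.map C).det)
      = (z • (1 : Matrix (Fin n) (Fin n) ℂ) + N).det := by
  have h := RingHom.map_det (evalRingHom z) ((X : ℂ[X]) • (1 : Matrix (Fin n) (Fin n) ℂ[X]) + N.map C)
  rw [show eval z (((X : ℂ[X]) • (1 : Matrix (Fin n) (Fin n) ℂ[X]) + N.map C).det)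
    = (evalRingHom z) (((X : ℂ[X]) • (1 : Matrix (Fin n) (Fin n) ℂ[X]) + N.map C).det) from rfl, h]
  congr 1
  ext i j
  simp only [Matrix.map_apply, Matrix.add_apply, Matrix.smul_apply, Matrix.one_apply,
    RingHom.mapMatrix_apply, coe_evalRingHom]
  split_ifs <;> simp

section Data
variable (a b : Fin m → Fin n → ℂ) (D : Matrix (Fin n) (Fin n) ℂ) (p : Fin m → ℝ)

lemma weights_sum_one : ∑ S : Finset (Fin m), W p S = 1 := by
  classical
  have h := Finset.prod_add (fun j => (p j : ℂ)) (fun j => 1 - (p j : ℂ)) Finset.univ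
  have h1 : ∏ j : Fin m, ((p j : ℂ) + (1 - (p j : ℂ))) = 1 := by
    simp
  rw [h1, Finset.powerset_univ] at h
  refine Eq.trans ?_ h.symm
  refine Finset.sum_congr rfl fun S _ => ?_
  simp only [W]
  rw [Finset.compl_eq_univ_sdiff]

lemma chi_smul_sum (S : Finset (Fin m)) (M : Fin m → Matrix (Fin n) (Fin n) ℂ) :
    ∑ j, (if j ∈ S then (1:ℂ) else 0) • M j = ∑ j ∈ S, M j := by
  classical
  have h : ∀ j, (if j ∈ S then (1:ℂ) else 0) • M j = if j ∈ S then M j else 0 := by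
    intro j; split_ifs <;> simp
  rw [Finset.sum_congr rfl fun j _ => h j, Finset.sum_ite_mem, Finset.univ_inter]

lemma shift_smul_sum (S : Finset (Fin m)) (c : ℂ) (M : Fin m → Matrix (Fin n) (Fin n) ℂ) :
    ∑ j, (c + if j ∈ S then (1:ℂ) else 0) • M j = c • (∑ j, M j) + ∑ j ∈ S, M j := by
  classical
  have h : ∀ j, (c + if j ∈ S then (1:ℂ) else 0) • M j
      = c • M j + (if j ∈ S then (1:ℂ) else 0) • M j := fun j => add_smul _ _ _
  rw [Finset.sum_congr rfl fun j _ => h j, Finset.sum_add_distrib, Finset.smul_sum,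
    chi_smul_sum]

/-- the bridge between the ε-perturbed sum and `Fp` at `T = univ`. -/
lemma sum_eq_Fp (c : ℂ) (x : ℂ) :
    ∑ S : Finset (Fin m), W p S * ((x • (1 : Matrix (Fin n) (Fin n) ℂ)
        + (Msum a b D S + c • Esum a b)).det)
      = Fp a b D p Finset.univ (fun _ => c) (fun _ => c) x := by
  classical
  rw [Fp, Finset.powerset_univ]
  refine Finset.sum_congr rfl fun S _ => ?_
  have hW : W p S = (∏ j ∈ S, (p j : ℂ)) * ∏ j ∈ Finset.univ \ S, (1 - (p j : ℂ)) := by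
    simp only [W]
    rw [Finset.compl_eq_univ_sdiff]
  rw [← hW]
  congr 1
  · rw [Phi]
    congr 1
    rw [shift_smul_sum, shift_smul_sum, Msum, Esum]
    have e : Finset.univ \ S = Sᶜ := (Finset.compl_eq_univ_sdiff S).symm
    rw [e, smul_add]
    abel

end Data

section Data2
variable (a b : Fin m → Fin n → ℂ) (D : Matrix (Fin n) (Fin n) ℂ) (p : Fin m → ℝ)

noncomputable def qpoly (ε : ℝ) : ℂ[X] :=
  ∑ S : Finset (Fin m), C (W p S) *
    ((X : ℂ[X]) • (1 : Matrix (Fin n) (Fin n) ℂ[X])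
      + (Msum a b D S + ((ε : ℂ) * Complex.I) • Esum a b).map C).det

lemma qpoly_coeff_n (ε : ℝ) : (qpoly a b D p ε).coeff n = 1 := by
  rw [qpoly, Polynomial.finset_sum_coeff]
  have h : ∀ S : Finset (Fin m),
      (C (W p S) * ((X : ℂ[X]) • (1 : Matrix (Fin n) (Fin n) ℂ[X])
        + (Msum a b D S + ((ε : ℂ) * Complex.I) • Esum a b).map C).det).coeff n = W p S := by
    intro S
    rw [coeff_C_mul]
    have hm := cp_monic (Msum a b D S + ((ε : ℂ) * Complex.I) • Esum a b)
    have hd := cp_natDegree (Msum a b D S + ((ε : ℂ) * Complex.I) • Esum a b)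
    have hc := hm.coeff_natDegree
    rw [hd] at hc
    rw [hc, mul_one]
  rw [Finset.sum_congr rfl fun S _ => h S, weights_sum_one]

lemma qpoly_natDegree_le (ε : ℝ) : (qpoly a b D p ε).natDegree ≤ n := by
  refine Polynomial.natDegree_sum_le_of_forall_le _ _ fun S _ => ?_
  exact le_trans (natDegree_C_mul_le _ _) (le_of_eq (cp_natDegree _))

lemma qpoly_monic (ε : ℝ) : (qpoly a b D p ε).Monic :=
  Polynomial.monic_of_natDegree_le_of_coeff_eq_one n (qpoly_natDegree_le a b D p ε)
    (qpoly_coeff_n a b D p ε)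

lemma qpoly_natDegree (ε : ℝ) : (qpoly a b D p ε).natDegree = n :=
  le_antisymm (qpoly_natDegree_le a b D p ε)
    (Polynomial.le_natDegree_of_ne_zero (by rw [qpoly_coeff_n]; exact one_ne_zero))

lemma qpoly_eval (ε : ℝ) (x : ℂ) :
    eval x (qpoly a b D p ε) = ∑ S : Finset (Fin m), W p S *
      ((x • (1 : Matrix (Fin n) (Fin n) ℂ)
        + (Msum a b D S + ((ε : ℂ) * Complex.I) • Esum a b)).det) := by
  rw [qpoly, Polynomial.eval_finset_sum]
  refine Finset.sum_congr rfl fun S _ => ?_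
  rw [eval_mul, eval_C, cp_eval]

lemma qpoly_root_im_nonpos (hD : D.PosSemidef) (hp : ∀ j, p j ∈ Set.Icc (0 : ℝ) 1)
    (ε : ℝ) (hε : 0 < ε) {r : ℂ} (hr : r ∈ (qpoly a b D p ε).roots) : r.im ≤ 0 := by
  by_contra him
  push_neg at him
  have hroot : eval r (qpoly a b D p ε) = 0 := (Polynomial.isRoot_of_mem_roots hr)
  rw [qpoly_eval, sum_eq_Fp] at hroot
  have hc : (((ε : ℂ) * Complex.I)).im = ε := by simp
  exact Fp_ne_zero a b D hD p hp Finset.univ _ _ r him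
    (fun j => by rw [hc]; exact hε) (fun j => by rw [hc]; exact hε) hroot

lemma abs_prod_lb (c : ℝ) (hc : 0 ≤ c) (R : Multiset ℂ) :
    (∀ r ∈ R, c ≤ ‖r‖) → c ^ (Multiset.card R) ≤ ‖R.prod‖ := by
  induction R using Multiset.induction_on with
  | empty => intro _; simp
  | cons r R ih =>
    intro h
    rw [Multiset.prod_cons, Multiset.card_cons, norm_mul, pow_succ']
    exact mul_le_mul (h r (Multiset.mem_cons_self _ _))
      (ih fun r' hr' => h r' (Multiset.mem_cons_of_mem hr'))
      (pow_nonneg hc _) (norm_nonneg _)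

lemma no_upper_root (hD : D.PosSemidef) (hp : ∀ j, p j ∈ Set.Icc (0 : ℝ) 1)
    (x : ℂ) (hx : 0 < x.im) :
    (∑ S : Finset (Fin m), W p S * ((x • (1 : Matrix (Fin n) (Fin n) ℂ)
      + Msum a b D S).det)) ≠ 0 := by
  intro h0
  set G : ℝ → ℂ := fun ε => ∑ S : Finset (Fin m), W p S *
      ((x • (1 : Matrix (Fin n) (Fin n) ℂ)
        + (Msum a b D S + ((ε : ℂ) * Complex.I) • Esum a b)).det) with hG
  have hG0 : G 0 = 0 := by
    rw [hG]
    simpa using h0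
  have hGlb : ∀ ε : ℝ, 0 < ε → x.im ^ n ≤ ‖G ε‖ := by
    intro ε hε
    have hq : G ε = eval x (qpoly a b D p ε) := (qpoly_eval a b D p ε x).symm
    rw [hq]
    have hmon := qpoly_monic a b D p ε
    have hsplit : Splits (qpoly a b D p ε) := IsAlgClosed.splits _
    have hfact := hsplit.eq_prod_roots_of_monic hmon
    have hcard : Multiset.card (qpoly a b D p ε).roots = n := by
      rw [(Polynomial.splits_iff_card_roots).mp hsplit, qpoly_natDegree]
    have hevalprod : eval x (qpoly a b D p ε)
        = (((qpoly a b D p ε).roots.map (fun r => x - r)).prod) := by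
      conv_lhs => rw [hfact]
      rw [show eval x (((qpoly a b D p ε).roots.map fun r => X - C r).prod)
          = (evalRingHom x) (((qpoly a b D p ε).roots.map fun r => X - C r).prod) from rfl,
        map_multiset_prod, Multiset.map_map]
      congr 1
      refine Multiset.map_congr rfl fun r _ => ?_
      simp
    rw [hevalprod]
    have := abs_prod_lb x.im (le_of_lt hx) ((qpoly a b D p ε).roots.map (fun r => x - r)) ?_
    · rwa [Multiset.card_map, hcard] at this
    · intro y hy
      obtain ⟨r, hr, rfl⟩ := Multiset.mem_map.mp hy
      have h1 : r.im ≤ 0 := qpoly_root_im_nonpos a b D p hD hp ε hε hr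
      have h2 : x.im ≤ (x - r).im := by rw [Complex.sub_im]; linarith
      exact le_trans h2 (le_trans (le_abs_self _) (Complex.abs_im_le_norm _))
  have hcont : Continuous G := by
    rw [hG]
    refine continuous_finset_sum _ fun S _ => ?_
    refine Continuous.mul continuous_const ?_
    refine Continuous.matrix_det ?_
    have h1 : Continuous fun ε : ℝ => ((ε : ℂ) * Complex.I) • Esum a b :=
      (Complex.continuous_ofReal.mul continuous_const).smul continuous_const
    exact continuous_const.add (continuous_const.add h1)
  have hpos : 0 < x.im ^ n := pow_pos hx n
  have htend : Filter.Tendsto (fun ε => ‖G ε‖) (nhds 0) (nhds 0) := by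
    have h := (continuous_norm.comp hcont).tendsto 0
    simpa [hG0, Function.comp_def] using h
  have hev : ∀ᶠ ε in nhds (0 : ℝ), ‖G ε‖ < x.im ^ n :=
    htend.eventually (gt_mem_nhds hpos)
  obtain ⟨δ, hδ, hball⟩ := Metric.eventually_nhds_iff.mp hev
  have hd2 : dist (δ / 2) (0 : ℝ) < δ := by
    rw [Real.dist_eq, sub_zero, abs_of_pos (by linarith)]
    linarith
  have h1 := hball hd2
  have h2 := hGlb (δ / 2) (by linarith)
  linarith

end Data2

section Final
variable (a b : Fin m → Fin n → ℂ) (D : Matrix (Fin n) (Fin n) ℂ) (p : Fin m → ℝ)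

lemma W_conj (S : Finset (Fin m)) : (starRingEnd ℂ) (W p S) = W p S := by
  simp only [W, _root_.map_mul, map_prod, map_sub, _root_.map_one, Complex.conj_ofReal]

lemma Msum_conj (hD : D.PosSemidef) (S : Finset (Fin m)) (i j : Fin n) :
    (starRingEnd ℂ) (Msum a b D S i j) = Msum a b D S j i := by
  have hDh : (starRingEnd ℂ) (D i j) = D j i := by
    have h := congrFun (congrFun hD.1 j) i
    rw [Matrix.conjTranspose_apply] at h
    exact h
  have h1 : ∀ (u : Fin m → Fin n → ℂ) (T : Finset (Fin m)),
      (starRingEnd ℂ) ((∑ k ∈ T, vecMulVec (u k) (star (u k))) i j)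
        = (∑ k ∈ T, vecMulVec (u k) (star (u k))) j i := by
    intro u T
    rw [Matrix.sum_apply, Matrix.sum_apply, map_sum]
    refine Finset.sum_congr rfl fun k _ => ?_
    simp only [Matrix.vecMulVec_apply, Pi.star_apply, _root_.map_mul, Complex.star_def,
      Complex.conj_conj]
    ring
  simp only [Msum, Matrix.add_apply, map_add]
  rw [hDh, h1, h1]

lemma det_conj_aux (M : Matrix (Fin n) (Fin n) ℂ)
    (hM : ∀ i j, (starRingEnd ℂ) (M i j) = M j i) (z : ℂ) :
    (starRingEnd ℂ) ((z • (1 : Matrix (Fin n) (Fin n) ℂ) + M).det)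
      = (((starRingEnd ℂ) z) • (1 : Matrix (Fin n) (Fin n) ℂ) + M).det := by
  rw [RingHom.map_det]
  rw [← Matrix.det_transpose (((starRingEnd ℂ) z) • (1 : Matrix (Fin n) (Fin n) ℂ) + M)]
  congr 1
  ext i j
  simp only [RingHom.mapMatrix_apply, Matrix.map_apply, Matrix.transpose_apply,
    Matrix.add_apply, Matrix.smul_apply, Matrix.one_apply, map_add, _root_.map_mul, smul_eq_mul]
  by_cases hij : i = j
  · subst hij
    simp [hM]
  · simp [hij, Ne.symm hij, hM i j]

lemma no_root_off_axis (hD : D.PosSemidef) (hp : ∀ j, p j ∈ Set.Icc (0 : ℝ) 1)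
    (z : ℂ) (hz0 : ∑ S : Finset (Fin m), W p S *
      ((z • (1 : Matrix (Fin n) (Fin n) ℂ) + Msum a b D S).det) = 0) : z.im = 0 := by
  by_contra him
  rcases lt_or_gt_of_ne him with hneg | hpos
  · have hconj : ∑ S : Finset (Fin m), W p S *
        (((starRingEnd ℂ) z • (1 : Matrix (Fin n) (Fin n) ℂ) + Msum a b D S).det) = 0 := by
      have h := congrArg (starRingEnd ℂ) hz0
      rw [map_sum, map_zero] at h
      rw [← h]
      refine Finset.sum_congr rfl fun S _ => ?_
      rw [_root_.map_mul, W_conj, det_conj_aux (Msum a b D S) (fun i j => Msum_conj a b D hD S i j) z]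
    exact no_upper_root a b D p hD hp ((starRingEnd ℂ) z)
      (by rw [Complex.conj_im]; linarith) hconj
  · exact no_upper_root a b D p hD hp z hpos hz0

end Final

end MSS

open MSS

/-- Marcus–Spielman–Srivastava: for vectors `a_1,…,a_m, b_1,…,b_m ∈ ℂ^n`, a
Hermitian positive semidefinite matrix `D`, and probabilities `p_1,…,p_m ∈ [0,1]`, the
polynomial `Σ_{S ⊆ [m]} (Π_{j∈S} p_j)(Π_{j∉S} (1−p_j)) det(xI + D + Σ_{j∈S} a_j a_j^* +
Σ_{j∉S} b_j b_j^*)` has only real roots. -/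
theorem mixed_characteristic_real_rooted (n m : ℕ)
    (a b : Fin m → (Fin n → ℂ)) (D : Matrix (Fin n) (Fin n) ℂ) (hD : D.PosSemidef)
    (p : Fin m → ℝ) (hp : ∀ j, p j ∈ Set.Icc (0 : ℝ) 1) :
    ∀ z : ℂ,
      (∑ S : Finset (Fin m),
        Polynomial.C (((∏ j ∈ S, (p j : ℂ)) * ∏ j ∈ Sᶜ, (1 - (p j : ℂ)))) *
          ((X : Polynomial ℂ) • (1 : Matrix (Fin n) (Fin n) (Polynomial ℂ)) +
            (D + (∑ j ∈ S, Matrix.vecMulVec (a j) (star (a j))) +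
              ∑ j ∈ Sᶜ, Matrix.vecMulVec (b j) (star (b j))).map Polynomial.C).det).IsRoot z →
      z.im = 0 := by
  intro z hz
  have hz' : eval z (∑ S : Finset (Fin m),
      Polynomial.C (((∏ j ∈ S, (p j : ℂ)) * ∏ j ∈ Sᶜ, (1 - (p j : ℂ)))) *
        ((X : Polynomial ℂ) • (1 : Matrix (Fin n) (Fin n) (Polynomial ℂ)) +
          (D + (∑ j ∈ S, Matrix.vecMulVec (a j) (star (a j))) +
            ∑ j ∈ Sᶜ, Matrix.vecMulVec (b j) (star (b j))).map Polynomial.C).det) = 0 := hz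
  rw [Polynomial.eval_finset_sum] at hz'
  have heval : ∀ S : Finset (Fin m),
      eval z (Polynomial.C (((∏ j ∈ S, (p j : ℂ)) * ∏ j ∈ Sᶜ, (1 - (p j : ℂ)))) *
        ((X : Polynomial ℂ) • (1 : Matrix (Fin n) (Fin n) (Polynomial ℂ)) +
          (D + (∑ j ∈ S, Matrix.vecMulVec (a j) (star (a j))) +
            ∑ j ∈ Sᶜ, Matrix.vecMulVec (b j) (star (b j))).map Polynomial.C).det)
      = W p S * ((z • (1 : Matrix (Fin n) (Fin n) ℂ) + Msum a b D S).det) := by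
    intro S
    rw [eval_mul, eval_C, cp_eval]
    rfl
  rw [Finset.sum_congr rfl fun S _ => heval S] at hz'
  exact no_root_off_axis a b D p hD hp z hz'
end

section
/- Let D be a mixed graph whose underlying simple graph G is bipartite, with n vertices. Then the spectrum of the Hermitian adjacency matrix H(D) is symmetric about the origin; equivalently, det(xI − H(D)) = (−1)^n det(−xI − H(D)), so that λ is an eigenvalue of H(D) with multiplicity k if and only if −λ is an eigenvalue of H(D) with multiplicity k. -/
variable {V : Type*}

open Classical in
/-- The Hermitian adjacency matrix of a mixed graph `D` on `G`: the orientation data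
`σ` is skew-symmetric with `σ u v = 0` meaning the edge `{u,v}` is unoriented (entry `1`),
and `σ u v = ±1` meaning the edge is oriented (entry `±i`). -/
noncomputable def mixedHermAll (G : SimpleGraph V) (σ : V → V → ℤ) : Matrix V V ℂ :=
  Matrix.of fun u v =>
    if G.Adj u v then (if σ u v = 0 then 1 else Complex.I * (σ u v : ℂ)) else 0

open Polynomial in
lemma aux_charpoly_eval {n : Type*} [Fintype n] [DecidableEq n] (M : Matrix n n ℂ) (x : ℂ) :
    M.charpoly.eval x = (x • (1 : Matrix n n ℂ) - M).det := by
  have : M.charpoly.eval x = (evalRingHom x) (Matrix.charmatrix M).det := rfl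
  rw [this, RingHom.map_det]
  congr 1
  ext i j
  by_cases h : i = j
  · subst h
    simp [Matrix.charmatrix_apply_eq, Matrix.one_apply]
  · simp [Matrix.charmatrix_apply_ne _ _ _ h, Matrix.one_apply_ne h]

lemma aux_sign_mul : ∀ a b : Fin 2, a ≠ b →
    ((if a = 0 then (1 : ℂ) else -1) * (if b = 0 then 1 else -1)) = -1 := by
  intro a b hab
  fin_cases a <;> fin_cases b <;> simp at hab ⊢ <;> norm_num

open Polynomial in
/-- If `p = C c * p.comp (-X)` then root multiplicities at `x` and `-x` agree. -/
lemma aux_rm_neg_le {p : ℂ[X]} (hp0 : p ≠ 0) (c : ℂ)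
    (hpq : p = C c * p.comp (-X)) (x : ℂ) :
    p.rootMultiplicity (-x) ≤ p.rootMultiplicity x := by
  set m := p.rootMultiplicity (-x) with hm
  obtain ⟨k, hk⟩ := Polynomial.pow_rootMultiplicity_dvd p (-x)
  have hcomp : p.comp (-X) = ((-1 : ℂ[X]) ^ m) * (X - C x) ^ m * k.comp (-X) := by
    rw [hk]
    simp only [mul_comp, pow_comp, sub_comp, X_comp, C_comp, neg_comp]
    have h3 : (-X : ℂ[X]) - C (-x) = (-1 : ℂ[X]) * (X - C x) := by
      rw [map_neg]; ring
    rw [h3, mul_pow]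
  have hdvd : (X - C x) ^ m ∣ p := by
    rw [hpq, hcomp]
    exact ⟨C c * (-1 : ℂ[X]) ^ m * k.comp (-X), by ring⟩
  exact (Polynomial.le_rootMultiplicity_iff hp0).mpr hdvd

/-- The spectrum of the Hermitian adjacency matrix of a mixed graph with a
bipartite underlying graph is symmetric about the origin:
`det(xI − H) = (−1)^n det(−xI − H)`, and every `λ` is an eigenvalue with the same
multiplicity as `−λ`. -/
theorem mixed_bipartite_symmetric_spectrum {V : Type*} [Fintype V] [DecidableEq V]
    (G : SimpleGraph V) (hbip : G.Colorable 2) (σ : V → V → ℤ)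
    (hskew : ∀ u v, σ v u = -σ u v)
    (hval : ∀ u v, G.Adj u v → σ u v = 0 ∨ σ u v = 1 ∨ σ u v = -1) :
    (∀ x : ℂ, (x • (1 : Matrix V V ℂ) - mixedHermAll G σ).det =
        (-1 : ℂ) ^ (Fintype.card V) * ((-x) • (1 : Matrix V V ℂ) - mixedHermAll G σ).det) ∧
      ∀ x : ℂ, (mixedHermAll G σ).charpoly.rootMultiplicity x =
        (mixedHermAll G σ).charpoly.rootMultiplicity (-x) := by
  classical
  obtain ⟨col⟩ := hbip
  set H : Matrix V V ℂ := mixedHermAll G σ with hHdef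
  set d : V → ℂ := fun v => if col v = 0 then 1 else -1 with hd
  set D : Matrix V V ℂ := Matrix.diagonal d with hD
  have hdd : ∀ v, d v * d v = 1 := by
    intro v; by_cases h : col v = 0 <;> simp [hd, h]
  have hDD : D * D = 1 := by
    rw [hD, Matrix.diagonal_mul_diagonal]
    simp [hdd]
  have hH0 : ∀ u v, ¬ G.Adj u v → H u v = 0 := by
    intro u v h
    simp only [hHdef, mixedHermAll, Matrix.of_apply, if_neg h]
  have hDHD : D * H * D = -H := by
    ext u v
    simp only [hD, Matrix.diagonal_mul, Matrix.mul_diagonal, Matrix.neg_apply]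
    by_cases h : G.Adj u v
    · have hne : col u ≠ col v := col.valid h
      have hduv : d u * d v = -1 := aux_sign_mul _ _ hne
      calc d u * H u v * d v = (d u * d v) * H u v := by ring
        _ = -H u v := by rw [hduv]; ring
    · rw [hH0 u v h]; ring
  have hdet2 : D.det * D.det = 1 := by
    rw [← Matrix.det_mul, hDD, Matrix.det_one]
  have part1 : ∀ x : ℂ, (x • (1 : Matrix V V ℂ) - H).det =
      (-1 : ℂ) ^ (Fintype.card V) * ((-x) • (1 : Matrix V V ℂ) - H).det := by
    intro x
    have h1 : D * (x • (1 : Matrix V V ℂ) - H) * D = -((-x) • (1 : Matrix V V ℂ) - H) := by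
      rw [Matrix.mul_sub, Matrix.sub_mul, Matrix.mul_smul, Matrix.smul_mul, mul_one, hDD, hDHD]
      rw [neg_sub, neg_smul, sub_neg_eq_add, sub_neg_eq_add, add_comm]
    have h2 := congrArg Matrix.det h1
    rw [Matrix.det_mul, Matrix.det_mul, Matrix.det_neg] at h2
    calc (x • (1 : Matrix V V ℂ) - H).det
        = D.det * D.det * (x • (1 : Matrix V V ℂ) - H).det := by rw [hdet2, one_mul]
      _ = D.det * (x • (1 : Matrix V V ℂ) - H).det * D.det := by ring
      _ = (-1 : ℂ) ^ (Fintype.card V) * ((-x) • (1 : Matrix V V ℂ) - H).det := h2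
  refine ⟨part1, ?_⟩
  have hp0 : H.charpoly ≠ 0 := (Matrix.charpoly_monic H).ne_zero
  have hpq : H.charpoly =
      Polynomial.C ((-1 : ℂ) ^ (Fintype.card V)) * H.charpoly.comp (-Polynomial.X) := by
    apply Polynomial.funext
    intro r
    rw [Polynomial.eval_mul, Polynomial.eval_C, Polynomial.eval_comp, Polynomial.eval_neg,
      Polynomial.eval_X, aux_charpoly_eval, aux_charpoly_eval]
    exact part1 r
  intro x
  refine le_antisymm ?_ (aux_rm_neg_le hp0 _ hpq x)
  have := aux_rm_neg_le hp0 _ hpq (-x)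
  rwa [neg_neg] at this
end

section
/- Let G be a finite simple graph with n vertices and let σ be a complete orientation of G (every edge of G is oriented). Then the spectrum of the Hermitian adjacency matrix H(G^σ) is symmetric about the origin; equivalently, det(xI − H(G^σ)) = (−1)^n det(−xI − H(G^σ)), so that λ is an eigenvalue of H(G^σ) with multiplicity k if and only if −λ is an eigenvalue of H(G^σ) with multiplicity k. -/
variable {V : Type*}

open Polynomial Matrix in
private lemma rm_comp_negX (p : Polynomial ℂ) (a : ℂ) :
    (p.comp (-X)).rootMultiplicity a = p.rootMultiplicity (-a) := by
  classical
  have hdvd : ∀ (q : Polynomial ℂ) (k : ℕ) (b : ℂ),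
      (X - C b) ^ k ∣ q → (X - C (-b)) ^ k ∣ q.comp (-X) := by
    rintro q k b ⟨c, rfl⟩
    refine ⟨(-1 : Polynomial ℂ) ^ k * c.comp (-X), ?_⟩
    rw [mul_comp, pow_comp, sub_comp, X_comp, C_comp]
    have h1 : (-X - C b : Polynomial ℂ) = -(X - C (-b)) := by
      rw [map_neg]; ring
    rw [h1, neg_pow]
    ring
  have hinv : ∀ q : Polynomial ℂ, (q.comp (-X)).comp (-X) = q := by
    intro q
    rw [comp_assoc]
    simp
  rcases eq_or_ne p 0 with rfl | hp
  · simp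
  have hpc : p.comp (-X) ≠ 0 := by
    intro h
    apply hp
    rw [← hinv p, h, zero_comp]
  apply le_antisymm
  · rw [le_rootMultiplicity_iff hp]
    have := hdvd (p.comp (-X)) ((p.comp (-X)).rootMultiplicity a) a
      (pow_rootMultiplicity_dvd _ a)
    rwa [hinv] at this
  · rw [le_rootMultiplicity_iff hpc]
    have := hdvd p (p.rootMultiplicity (-a)) (-a) (pow_rootMultiplicity_dvd _ (-a))
    rwa [neg_neg] at this

open Polynomial Matrix in
/-- The spectrum of the Hermitian adjacency matrix of a completely oriented
graph is symmetric about the origin: `det(xI − H) = (−1)^n det(−xI − H)`, and every `λ` is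
an eigenvalue with the same multiplicity as `−λ`. -/
theorem oriented_symmetric_spectrum {V : Type*} [Fintype V] [DecidableEq V]
    (G : SimpleGraph V) (τ : V → V → ℤ)
    (hskew : ∀ u v, τ v u = -τ u v)
    (hval : ∀ u v, G.Adj u v → τ u v = 1 ∨ τ u v = -1) :
    (∀ x : ℂ, (x • (1 : Matrix V V ℂ) - orientHerm G τ).det =
        (-1 : ℂ) ^ (Fintype.card V) * ((-x) • (1 : Matrix V V ℂ) - orientHerm G τ).det) ∧
      ∀ x : ℂ, (orientHerm G τ).charpoly.rootMultiplicity x =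
        (orientHerm G τ).charpoly.rootMultiplicity (-x) := by
  classical
  set H := orientHerm G τ with hH
  set n := Fintype.card V with hn
  have hT : Hᵀ = -H := by
    ext u v
    show H v u = -(H u v)
    simp only [hH, orientHerm, Matrix.of_apply]
    by_cases h : G.Adj u v
    · rw [if_pos h.symm, if_pos h, hskew]
      push_cast
      ring
    · rw [if_neg (fun hc => h hc.symm), if_neg h, neg_zero]
  have h1 : ∀ x : ℂ, (x • (1 : Matrix V V ℂ) - H).det =
      (-1 : ℂ) ^ n * ((-x) • (1 : Matrix V V ℂ) - H).det := by
    intro x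
    have key : x • (1 : Matrix V V ℂ) - H = ((x • (1 : Matrix V V ℂ) - H)ᵀ)ᵀ := by
      rw [transpose_transpose]
    calc (x • (1 : Matrix V V ℂ) - H).det
        = ((x • (1 : Matrix V V ℂ) - H)ᵀ).det := (Matrix.det_transpose _).symm
      _ = (x • (1 : Matrix V V ℂ) + H).det := by
          rw [transpose_sub, transpose_smul, transpose_one, hT, sub_neg_eq_add]
      _ = (-((-x) • (1 : Matrix V V ℂ) - H)).det := by
          congr 1
          rw [neg_sub, neg_smul, sub_neg_eq_add, add_comm]
      _ = (-1 : ℂ) ^ n * ((-x) • (1 : Matrix V V ℂ) - H).det := by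
          rw [Matrix.det_neg, hn]
  refine ⟨h1, ?_⟩
  have hev : ∀ x : ℂ, H.charpoly.eval x = (x • (1 : Matrix V V ℂ) - H).det := by
    intro x
    rw [Matrix.charpoly, ← coe_evalRingHom, RingHom.map_det]
    congr 1
    ext i j
    by_cases h : i = j
    · subst h
      simp [charmatrix_apply_eq, Matrix.sub_apply, Matrix.smul_apply, Matrix.one_apply_eq]
    · simp [charmatrix_apply_ne _ _ _ h, Matrix.sub_apply, Matrix.smul_apply,
        Matrix.one_apply_ne h]
  have hcomp : H.charpoly.comp (-X) = (-1 : Polynomial ℂ) ^ n * H.charpoly := by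
    apply Polynomial.funext
    intro x
    simp only [eval_comp, eval_mul, eval_pow, eval_neg, eval_one, eval_X]
    rw [hev, hev, h1 x, ← mul_assoc, ← mul_pow]
    norm_num
  intro x
  have hx : H.charpoly.rootMultiplicity x
      = ((H.charpoly.comp (-X)).rootMultiplicity (-x)) := by
    rw [rm_comp_negX, neg_neg]
  rw [hx, hcomp]
  rw [← count_roots, ← count_roots]
  congr 1
  have hC : ((-1 : Polynomial ℂ) ^ n) = C ((-1 : ℂ) ^ n) := by
    rw [← C_1, ← C_neg, ← C_pow]
  rw [hC, roots_C_mul]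
  exact pow_ne_zero _ (neg_ne_zero.mpr one_ne_zero)
end

section
/- Let D be any mixed graph with underlying finite simple graph G. Then the spectral radius of the Hermitian adjacency matrix H(D) (the largest absolute value of its eigenvalues) is at most the spectral radius of the adjacency matrix A(G) of G. -/
variable {V : Type*}

open Matrix in
/-- Rayleigh-type bound for a real symmetric matrix. -/
lemma rayleigh_bound {V : Type*} [Fintype V] [DecidableEq V] [Nonempty V]
    {A : Matrix V V ℝ} (hA : A.IsHermitian) (y : V → ℝ) :
    y ⬝ᵥ (A *ᵥ y) ≤ (⨆ j, |hA.eigenvalues j|) * (y ⬝ᵥ y) := by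
  set M := ⨆ j, |hA.eigenvalues j| with hMdef
  have hbdd : BddAbove (Set.range fun j => |hA.eigenvalues j|) :=
    (Set.finite_range _).bddAbove
  have hMle : ∀ j, |hA.eigenvalues j| ≤ M := fun j => le_ciSup hbdd j
  set U : Matrix V V ℝ := (hA.eigenvectorUnitary : Matrix V V ℝ) with hU
  have hstar : star U = Uᵀ := by
    rw [Matrix.star_eq_conjTranspose, Matrix.conjTranspose_eq_transpose_of_trivial]
  have hUU : U * star U = 1 := (Matrix.mem_unitaryGroup_iff).mp hA.eigenvectorUnitary.2
  have hdot : ∀ w : V → ℝ, y ⬝ᵥ (U *ᵥ w) = (Uᵀ *ᵥ y) ⬝ᵥ w := fun w => by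
    rw [Matrix.mulVec_transpose, Matrix.dotProduct_mulVec]
  have hzz : (Uᵀ *ᵥ y) ⬝ᵥ (Uᵀ *ᵥ y) = y ⬝ᵥ y := by
    rw [← hdot, Matrix.mulVec_mulVec, ← hstar, hUU, Matrix.one_mulVec]
  have h1 : y ⬝ᵥ (A *ᵥ y)
      = (Uᵀ *ᵥ y) ⬝ᵥ (Matrix.diagonal hA.eigenvalues *ᵥ (Uᵀ *ᵥ y)) := by
    conv_lhs => rw [hA.spectral_theorem, Unitary.conjStarAlgAut_apply, ← hU]
    rw [← Matrix.mulVec_mulVec, ← Matrix.mulVec_mulVec, hdot, hstar]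
    simp [RCLike.ofReal_real_eq_id, Function.comp_def]
  rw [h1, ← hzz]
  rw [dotProduct, dotProduct, Finset.mul_sum]
  apply Finset.sum_le_sum
  intro j _
  rw [Matrix.mulVec_diagonal]
  set t := (Uᵀ *ᵥ y) j
  have h2 : t * (hA.eigenvalues j * t) ≤ |hA.eigenvalues j| * (t * t) := by
    rw [show t * (hA.eigenvalues j * t) = hA.eigenvalues j * (t * t) by ring]
    exact mul_le_mul_of_nonneg_right (le_abs_self _) (mul_self_nonneg _)
  exact h2.trans (mul_le_mul_of_nonneg_right (hMle j) (mul_self_nonneg _))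

open Classical in
/-- The spectral radius of the Hermitian adjacency matrix of any mixed graph
on `G` is at most the spectral radius of the adjacency matrix of `G`. -/
theorem mixed_spectral_radius_le_adjMatrix {V : Type*} [Fintype V] [DecidableEq V]
    (G : SimpleGraph V) (σ : V → V → ℤ)
    (hskew : ∀ u v, σ v u = -σ u v)
    (hval : ∀ u v, G.Adj u v → σ u v = 0 ∨ σ u v = 1 ∨ σ u v = -1)
    (hH : (mixedHermAll G σ).IsHermitian) (hA : (G.adjMatrix ℝ).IsHermitian) :
    ∀ i, |hH.eigenvalues i| ≤ ⨆ j, |hA.eigenvalues j| := by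
  open Matrix in
  intro i
  haveI : Nonempty V := ⟨i⟩
  set μ := hH.eigenvalues i with hμ
  set v : V → ℂ := ⇑(hH.eigenvectorBasis i) with hvdef
  have hv : mixedHermAll G σ *ᵥ v = μ • v := hH.mulVec_eigenvectorBasis i
  have hvne : v ≠ 0 := by
    intro h
    exact hH.eigenvectorBasis.orthonormal.ne_zero i (by ext u; exact congrFun h u)
  set y : V → ℝ := fun u => ‖v u‖ with hy
  have habs : ∀ u w, ‖mixedHermAll G σ u w‖ = G.adjMatrix ℝ u w := by
    intro u w
    simp only [mixedHermAll, Matrix.of_apply, SimpleGraph.adjMatrix_apply]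
    by_cases h : G.Adj u w
    · simp only [h, if_true]
      by_cases h0 : σ u w = 0
      · simp [h0]
      · rcases hval u w h with h1 | h1 | h1 <;> simp [h0, h1] at *
    · simp [h]
  have key : ∀ u, |μ| * y u ≤ (G.adjMatrix ℝ *ᵥ y) u := by
    intro u
    have hvu : (mixedHermAll G σ *ᵥ v) u = (μ : ℂ) * v u := by
      rw [hv]; simp [Complex.real_smul]
    calc |μ| * y u = ‖(μ : ℂ) * v u‖ := by
          rw [norm_mul, Complex.norm_real, Real.norm_eq_abs]
      _ = ‖∑ w, mixedHermAll G σ u w * v w‖ := by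
          rw [← hvu]; rfl
      _ ≤ ∑ w, ‖mixedHermAll G σ u w * v w‖ :=
          norm_sum_le _ _
      _ = ∑ w, G.adjMatrix ℝ u w * y w := by
          refine Finset.sum_congr rfl fun w _ => ?_
          rw [norm_mul, habs]
      _ = (G.adjMatrix ℝ *ᵥ y) u := rfl
  have hynn : ∀ u, 0 ≤ y u := fun u => norm_nonneg _
  have hyy : 0 < y ⬝ᵥ y := by
    obtain ⟨u, hu⟩ : ∃ u, v u ≠ 0 := by
      by_contra h
      push_neg at h
      exact hvne (funext h)
    apply Finset.sum_pos' (fun w _ => mul_nonneg (hynn w) (hynn w))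
    exact ⟨u, Finset.mem_univ u, mul_pos (by simpa [hy] using hu) (by simpa [hy] using hu)⟩
  have h1 : |μ| * (y ⬝ᵥ y) ≤ y ⬝ᵥ (G.adjMatrix ℝ *ᵥ y) := by
    rw [dotProduct, dotProduct, Finset.mul_sum]
    apply Finset.sum_le_sum
    intro u _
    rw [show |μ| * (y u * y u) = y u * (|μ| * y u) by ring]
    exact mul_le_mul_of_nonneg_left (key u) (hynn u)
  have h2 := rayleigh_bound hA y
  have h3 := h1.trans h2
  exact le_of_mul_le_mul_right h3 hyy
end

section
/- For every finite simple graph G, the matching polynomial μ_G(x) has only real roots. -/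
open Polynomial

variable {V : Type*}

open scoped Classical in
/-- Matchings of `G` supported inside the vertex set `S`. -/
noncomputable def HLmatch [Fintype V] (G : SimpleGraph V) (S : Finset V) :
    Finset (Finset (Sym2 V)) :=
  Finset.univ.filter (fun M =>
    (∀ e ∈ M, e ∈ G.edgeSet ∧ ∀ w ∈ e, w ∈ S) ∧
    (M : Set (Sym2 V)).Pairwise fun e f => ∀ w, w ∈ e → w ∉ f)

lemma mem_HLmatch [Fintype V] {G : SimpleGraph V} {S : Finset V} {M : Finset (Sym2 V)} :
    M ∈ HLmatch G S ↔
      (∀ e ∈ M, e ∈ G.edgeSet ∧ ∀ w ∈ e, w ∈ S) ∧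
      (M : Set (Sym2 V)).Pairwise fun e f => ∀ w, w ∈ e → w ∉ f := by
  classical
  simp [HLmatch]

lemma HLmatch_card_le [Fintype V] {G : SimpleGraph V} {S : Finset V} {M : Finset (Sym2 V)}
    (hM : M ∈ HLmatch G S) : 2 * M.card ≤ S.card := by
  classical
  rw [mem_HLmatch] at hM
  have hsub : M.biUnion (fun e => Finset.univ.filter (· ∈ e)) ⊆ S := by
    intro w hw
    simp only [Finset.mem_biUnion, Finset.mem_filter] at hw
    obtain ⟨e, he, _, hwe⟩ := hw
    exact (hM.1 e he).2 w hwe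
  have hdisj : ∀ e ∈ M, ∀ f ∈ M, e ≠ f →
      Disjoint (Finset.univ.filter (· ∈ e)) (Finset.univ.filter (· ∈ f)) := by
    intro e he f hf hef
    rw [Finset.disjoint_left]
    intro w hw hw'
    simp only [Finset.mem_filter] at hw hw'
    exact hM.2 he hf hef w hw.2 hw'.2
  have hcard : (M.biUnion (fun e => Finset.univ.filter (· ∈ e))).card =
      ∑ e ∈ M, (Finset.univ.filter (· ∈ e)).card := Finset.card_biUnion hdisj
  have h2 : ∀ e ∈ M, (Finset.univ.filter (· ∈ e)).card = 2 := by
    intro e he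
    induction e with
    | _ a b =>
      have hab : a ≠ b := by
        intro h
        exact (G.irrefl (h ▸ (hM.1 _ he).1))
      have : (Finset.univ.filter (· ∈ s(a, b))) = {a, b} := by
        ext w; simp [Sym2.mem_iff]
      rw [this, Finset.card_pair hab]
  calc 2 * M.card = ∑ e ∈ M, (Finset.univ.filter (· ∈ e)).card := by
        rw [Finset.sum_congr rfl h2, Finset.sum_const, smul_eq_mul, mul_comm]
    _ ≤ S.card := by rw [← hcard]; exact Finset.card_le_card hsub

/-- The matching "polynomial" of the subgraph induced on `S`, evaluated at `z`. -/
noncomputable def HLf [Fintype V] (G : SimpleGraph V) (z : ℂ) (S : Finset V) : ℂ :=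
  ∑ M ∈ HLmatch G S, (-1 : ℂ) ^ M.card * z ^ (S.card - 2 * M.card)

lemma HLf_empty [Fintype V] (G : SimpleGraph V) (z : ℂ) : HLf G z ∅ = 1 := by
  classical
  have : HLmatch G (∅ : Finset V) = {∅} := by
    ext M
    rw [mem_HLmatch]
    constructor
    · rintro ⟨h1, -⟩
      simp only [Finset.mem_singleton]
      by_contra hne
      obtain ⟨e, he⟩ := Finset.nonempty_iff_ne_empty.2 hne
      induction e with
      | _ a b => exact absurd ((h1 _ he).2 a (by simp)) (by simp)
    · intro h
      rw [Finset.mem_singleton] at h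
      subst h
      simp
  simp [HLf, this]

open scoped Classical in
lemma HLmatch_erase_eq [Fintype V] (G : SimpleGraph V) {S : Finset V} (v : V) :
    (HLmatch G S).filter (fun M => ∀ e ∈ M, v ∉ e) = HLmatch G (S.erase v) := by
  ext M
  simp only [Finset.mem_filter, mem_HLmatch]
  constructor
  · rintro ⟨⟨h1, h2⟩, h3⟩
    refine ⟨fun e he => ⟨(h1 e he).1, fun w hw => ?_⟩, h2⟩
    refine Finset.mem_erase.2 ⟨?_, (h1 e he).2 w hw⟩
    rintro rfl; exact h3 e he hw
  · rintro ⟨h1, h2⟩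
    exact ⟨⟨fun e he => ⟨(h1 e he).1, fun w hw => Finset.mem_of_mem_erase ((h1 e he).2 w hw)⟩, h2⟩,
      fun e he hv => (Finset.mem_erase.1 ((h1 e he).2 v hv)).1 rfl⟩

open scoped Classical in
lemma HLmatch_covered_eq [Fintype V] (G : SimpleGraph V) {S : Finset V} {v : V} (hv : v ∈ S) :
    (HLmatch G S).filter (fun M => ¬ ∀ e ∈ M, v ∉ e) =
      (((S.erase v).filter (G.Adj v))).biUnion
        (fun u => (HLmatch G ((S.erase v).erase u)).image (insert s(v, u))) := by
  ext M
  simp only [Finset.mem_filter, Finset.mem_biUnion, Finset.mem_image, mem_HLmatch]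
  constructor
  · rintro ⟨⟨h1, h2⟩, h3⟩
    push_neg at h3
    obtain ⟨e, heM, hve⟩ := h3
    obtain ⟨u, rfl⟩ := Sym2.mem_iff_exists.1 hve
    have hadj : G.Adj v u := (G.mem_edgeSet).1 (h1 _ heM).1
    have huv : u ≠ v := fun h => G.irrefl (h ▸ hadj)
    have huS : u ∈ S.erase v := Finset.mem_erase.2 ⟨huv, (h1 _ heM).2 u (by simp)⟩
    refine ⟨u, ⟨huS, hadj⟩, M.erase s(v, u), ⟨?_, ?_⟩, ?_⟩
    · intro e he
      have heM' : e ∈ M := Finset.mem_of_mem_erase he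
      have hene : e ≠ s(v, u) := Finset.ne_of_mem_erase he
      refine ⟨(h1 e heM').1, fun w hw => ?_⟩
      have hwvu : w ∉ s(v, u) := h2 heM' heM (by exact hene.symm ∘ Eq.symm) w hw
      refine Finset.mem_erase.2 ⟨fun h => hwvu (by simp [h]), Finset.mem_erase.2
        ⟨fun h => hwvu (by simp [h]), (h1 e heM').2 w hw⟩⟩
    · exact Set.Pairwise.mono (fun x hx => Finset.mem_coe.2 (Finset.mem_of_mem_erase (Finset.mem_coe.1 hx))) h2
    · exact Finset.insert_erase heM
  · rintro ⟨u, hu, M', ⟨h1, h2⟩, rfl⟩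
    have hadj : G.Adj v u := hu.2
    have hvu_not : s(v, u) ∉ M' := by
      intro h
      have := (h1 _ h).2 v (by simp)
      exact (Finset.mem_erase.1 (Finset.mem_of_mem_erase this)).1 rfl
    have hsupp : ∀ e ∈ M', ∀ w ∈ e, w ∉ s(v, u) := by
      intro e he w hw
      have hw' := (h1 e he).2 w hw
      have hw1 := (Finset.mem_erase.1 hw').1
      have hw2 := (Finset.mem_erase.1 (Finset.mem_of_mem_erase hw')).1
      simp only [Sym2.mem_iff]
      rintro (rfl | rfl)
      · exact hw2 rfl
      · exact hw1 rfl
    refine ⟨⟨?_, ?_⟩, ?_⟩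
    · intro e he
      rcases Finset.mem_insert.1 he with rfl | he'
      · exact ⟨(G.mem_edgeSet).2 hadj, by
          intro w hw
          simp only [Sym2.mem_iff] at hw
          rcases hw with rfl | rfl
          · exact hv
          · exact Finset.mem_of_mem_erase hu.1⟩
      · exact ⟨(h1 e he').1, fun w hw =>
          Finset.mem_of_mem_erase (Finset.mem_of_mem_erase ((h1 e he').2 w hw))⟩
    · rw [Finset.coe_insert]
      haveI : Std.Symm (fun e f : Sym2 V => ∀ w, w ∈ e → w ∉ f) :=
        ⟨fun e f hef w hwf hwe => hef w hwe hwf⟩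
      refine Set.pairwise_insert_of_symm.2 ⟨h2, fun e he _ w hw hwe => hsupp e he w hwe hw⟩
    · intro h
      exact h s(v, u) (Finset.mem_insert_self _ _) (by simp)

open scoped Classical

lemma HLf_recursion [Fintype V] (G : SimpleGraph V) (z : ℂ) {S : Finset V} {v : V}
    (hv : v ∈ S) :
    HLf G z S = z * HLf G z (S.erase v)
      - ∑ u ∈ (S.erase v).filter (G.Adj v), HLf G z ((S.erase v).erase u) := by
  have hcard : S.card = (S.erase v).card + 1 := (Finset.card_erase_add_one hv).symm
  have hsplit := Finset.sum_filter_add_sum_filter_not (HLmatch G S)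
    (fun M => ∀ e ∈ M, v ∉ e) (fun M => (-1 : ℂ) ^ M.card * z ^ (S.card - 2 * M.card))
  have hA : ∑ M ∈ (HLmatch G S).filter (fun M => ∀ e ∈ M, v ∉ e),
      (-1 : ℂ) ^ M.card * z ^ (S.card - 2 * M.card) = z * HLf G z (S.erase v) := by
    rw [HLmatch_erase_eq, HLf, Finset.mul_sum]
    refine Finset.sum_congr rfl (fun M hM => ?_)
    have h2 : 2 * M.card ≤ (S.erase v).card := HLmatch_card_le hM
    have : S.card - 2 * M.card = ((S.erase v).card - 2 * M.card) + 1 := by omega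
    rw [this, pow_succ]
    ring
  have hB : ∑ M ∈ (HLmatch G S).filter (fun M => ¬ ∀ e ∈ M, v ∉ e),
      (-1 : ℂ) ^ M.card * z ^ (S.card - 2 * M.card)
      = - ∑ u ∈ (S.erase v).filter (G.Adj v), HLf G z ((S.erase v).erase u) := by
    rw [HLmatch_covered_eq G hv, Finset.sum_biUnion, ← Finset.sum_neg_distrib]
    · refine Finset.sum_congr rfl (fun u hu => ?_)
      simp only [Finset.mem_filter] at hu
      have hvu_not : ∀ M' ∈ HLmatch G ((S.erase v).erase u), s(v, u) ∉ M' := by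
        intro M' hM' h
        have := ((mem_HLmatch.1 hM').1 _ h).2 v (by simp)
        exact (Finset.mem_erase.1 (Finset.mem_of_mem_erase this)).1 rfl
      rw [Finset.sum_image (fun M1 h1 M2 h2 heq => by
        have := congrArg (Finset.erase · s(v, u)) heq
        simpa [Finset.erase_insert (hvu_not _ h1), Finset.erase_insert (hvu_not _ h2)]
          using this)]
      rw [HLf, ← Finset.sum_neg_distrib]
      refine Finset.sum_congr rfl (fun M' hM' => ?_)
      have h2 : 2 * M'.card ≤ ((S.erase v).erase u).card := HLmatch_card_le hM'
      have hcard2 : ((S.erase v).erase u).card = S.card - 2 := by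
        rw [Finset.card_erase_of_mem hu.1, Finset.card_erase_of_mem hv]; omega
      have hScard : 2 ≤ S.card := by
        have := Finset.one_lt_card.2 ⟨v, hv, u, Finset.mem_of_mem_erase hu.1,
          fun h => (Finset.mem_erase.1 hu.1).1 h.symm⟩
        omega
      rw [Finset.card_insert_of_notMem (hvu_not _ hM')]
      have hexp : S.card - 2 * (M'.card + 1) = ((S.erase v).erase u).card - 2 * M'.card := by
        omega
      rw [hexp, pow_succ]
      ring
    · intro u1 h1 u2 h2 hne
      simp only [Finset.mem_coe, Finset.mem_filter] at h1 h2
      simp only [Function.onFun]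
      rw [Finset.disjoint_left]
      rintro M hM1 hM2
      simp only [Finset.mem_image] at hM1 hM2
      obtain ⟨M1, hM1', rfl⟩ := hM1
      obtain ⟨M2, hM2', heq⟩ := hM2
      have hmem : s(v, u2) ∈ insert s(v, u1) M1 := heq ▸ Finset.mem_insert_self _ _
      rcases Finset.mem_insert.1 hmem with h | h
      · exact hne (Sym2.congr_right.1 h.symm)
      · have := ((mem_HLmatch.1 hM1').1 _ h).2 v (by simp)
        exact (Finset.mem_erase.1 (Finset.mem_of_mem_erase this)).1 rfl
  rw [HLf, ← hsplit, hA, hB]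
  ring

lemma HLf_key [Fintype V] (G : SimpleGraph V) {z : ℂ} (hz : 0 < z.im) (S : Finset V) :
    HLf G z S ≠ 0 ∧ ∀ v ∈ S, z.im ≤ (HLf G z S / HLf G z (S.erase v)).im := by
  induction S using Finset.strongInduction with
  | _ S ih =>
    have hratio : ∀ v ∈ S, z.im ≤ (HLf G z S / HLf G z (S.erase v)).im := by
      intro v hv
      have hss : S.erase v ⊂ S := Finset.erase_ssubset hv
      obtain ⟨hS'ne, hS'rat⟩ := ih _ hss
      have hrec := HLf_recursion G z hv
      have hdiv : HLf G z S / HLf G z (S.erase v) =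
          z - ∑ u ∈ (S.erase v).filter (G.Adj v),
            HLf G z ((S.erase v).erase u) / HLf G z (S.erase v) := by
        rw [hrec, sub_div, Finset.sum_div, mul_div_assoc, div_self hS'ne, mul_one]
      rw [hdiv, Complex.sub_im]
      have hsum : (∑ u ∈ (S.erase v).filter (G.Adj v),
          HLf G z ((S.erase v).erase u) / HLf G z (S.erase v)).im ≤ 0 := by
        rw [Complex.im_sum]
        refine Finset.sum_nonpos (fun u hu => ?_)
        have huS : u ∈ S.erase v := (Finset.mem_filter.1 hu).1
        have hw : z.im ≤ (HLf G z (S.erase v) / HLf G z ((S.erase v).erase u)).im :=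
          hS'rat u huS
        have hss2 : (S.erase v).erase u ⊂ S :=
          Finset.ssubset_of_subset_of_ssubset (Finset.erase_subset _ _) hss
        have hne2 : HLf G z ((S.erase v).erase u) ≠ 0 := (ih _ hss2).1
        have : HLf G z ((S.erase v).erase u) / HLf G z (S.erase v) =
            (HLf G z (S.erase v) / HLf G z ((S.erase v).erase u))⁻¹ := by
          rw [inv_div]
        rw [this, Complex.inv_im]
        apply div_nonpos_of_nonpos_of_nonneg
        · linarith
        · exact Complex.normSq_nonneg _
      linarith
    refine ⟨?_, hratio⟩
    rcases S.eq_empty_or_nonempty with rfl | ⟨v, hv⟩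
    · rw [HLf_empty]; exact one_ne_zero
    · intro h0
      have h := hratio v hv
      rw [h0, zero_div] at h
      simp only [Complex.zero_im] at h
      linarith

lemma numMatchings_eq_card [Fintype V] (G : SimpleGraph V) (k : ℕ) :
    numMatchings G k = ((HLmatch G Finset.univ).filter (fun M => M.card = k)).card := by
  rw [numMatchings, Nat.card_eq_fintype_card, Fintype.card_subtype]
  apply congrArg Finset.card
  refine Finset.ext fun M => ?_
  rw [Finset.mem_filter]
  simp only [Finset.mem_filter, Finset.mem_univ, true_and, mem_HLmatch, IsMatchingSet]
  constructor
  · rintro ⟨hk, h1, h2⟩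
    exact ⟨⟨fun e he => ⟨h1 he, fun w _ => trivial⟩, h2⟩, hk⟩
  · rintro ⟨⟨h1, h2⟩, hk⟩
    exact ⟨hk, fun e he => (h1 e he).1, h2⟩

lemma aeval_matchingPoly [Fintype V] (G : SimpleGraph V) (z : ℂ) :
    aeval z (matchingPoly G) = HLf G z Finset.univ := by
  have hmap : ∀ M ∈ HLmatch G Finset.univ, M.card ∈ Finset.range (Fintype.card V + 1) := by
    intro M hM
    have := HLmatch_card_le hM
    rw [Finset.card_univ] at this
    rw [Finset.mem_range]
    omega
  rw [HLf, ← Finset.sum_fiberwise_of_maps_to hmap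
    (fun M => (-1 : ℂ) ^ M.card * z ^ ((Finset.univ : Finset V).card - 2 * M.card))]
  rw [matchingPoly, map_sum]
  refine Finset.sum_congr rfl (fun k hk => ?_)
  have hinner : ∑ M ∈ (HLmatch G Finset.univ).filter (fun M => M.card = k),
      (-1 : ℂ) ^ M.card * z ^ ((Finset.univ : Finset V).card - 2 * M.card)
      = (((HLmatch G Finset.univ).filter (fun M => M.card = k)).card : ℂ) *
        ((-1 : ℂ) ^ k * z ^ (Fintype.card V - 2 * k)) := by
    rw [Finset.sum_congr rfl (fun M hM => ?_), Finset.sum_const, nsmul_eq_mul]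
    have := (Finset.mem_filter.1 hM).2
    rw [this, Finset.card_univ]
  rw [hinner, ← numMatchings_eq_card]
  simp only [map_mul, aeval_C, map_pow, aeval_X]
  push_cast
  ring

/-- The matching polynomial of a finite simple graph has only real roots. -/
theorem matchingPoly_real_rooted {V : Type*} [Fintype V] (G : SimpleGraph V) :
    ∀ z : ℂ, Polynomial.aeval z (matchingPoly G) = 0 → z.im = 0 := by
  intro z hz0
  by_contra him
  have key : ∀ w : ℂ, 0 < w.im → aeval w (matchingPoly G) ≠ 0 := by
    intro w hw
    rw [aeval_matchingPoly]
    exact (HLf_key G hw Finset.univ).1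
  rcases lt_or_gt_of_ne him with hlt | hgt
  · have hconj : aeval (Complex.conjAe z) (matchingPoly G) = 0 := by
      have := Polynomial.aeval_algHom_apply Complex.conjAe.toAlgHom z (matchingPoly G)
      exact this.trans (by rw [hz0, map_zero])
    refine key _ ?_ hconj
    simp only [Complex.conjAe_coe, Complex.conj_im]
    linarith
  · exact key z hgt hz0
end
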